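/- arXiv:1011.1775 — 9 statements merged into one kernel-verified Lean document; each statement's English description precedes it below -/
import Mathlib

section
/- Let A be a continuous matrix-valued function on an interval I containing t₀ such that A(t) · A(s) = A(s) · A(t) for all t, s ∈ I. Then the iterated Peano–Baker integrals satisfy I_n(t) = (1/n!) · (∫_{t₀}^t A(τ) dτ)^n for all t ∈ I and all n ≥ 0. -/
attribute [local instance] Matrix.normedAddCommGroup Matrix.normedSpace

/-- The iterated Peano–Baker integrals: `pbIter A t₀ 0 = 1` (identity matrix) and
`pbIter A t₀ (n+1) t = ∫_{t₀}^t A τ * pbIter A t₀ n τ dτ`. -/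
noncomputable def pbIter {d : ℕ} (A : ℝ → Matrix (Fin d) (Fin d) ℝ) (t₀ : ℝ) :
    ℕ → ℝ → Matrix (Fin d) (Fin d) ℝ
  | 0 => fun _ => 1
  | n + 1 => fun t => ∫ τ in t₀..t, A τ * pbIter A t₀ n τ

theorem stmt2 {d : ℕ} (hd : 1 ≤ d) (A : ℝ → Matrix (Fin d) (Fin d) ℝ)
    (I : Set ℝ) (hI : I.OrdConnected) (t₀ : ℝ) (ht₀ : t₀ ∈ I)
    (hA : ContinuousOn A I)
    (hcomm : ∀ t ∈ I, ∀ s ∈ I, A t * A s = A s * A t) :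
    ∀ n : ℕ, ∀ t ∈ I,
      pbIter A t₀ n t = ((n.factorial : ℝ))⁻¹ • (∫ τ in t₀..t, A τ) ^ n := by
  letI : ENormedAddMonoid (Matrix (Fin d) (Fin d) ℝ) :=
    inferInstanceAs (ENormedAddMonoid (Fin d → Fin d → ℝ))
  letI : TopologicalSpace.PseudoMetrizableSpace (Matrix (Fin d) (Fin d) ℝ) :=
    inferInstanceAs (TopologicalSpace.PseudoMetrizableSpace (Fin d → Fin d → ℝ))
  set B : ℝ → Matrix (Fin d) (Fin d) ℝ := fun t => ∫ τ in t₀..t, A τ with hBdef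
  have hIcc : ∀ a ∈ I, ∀ b ∈ I, Set.uIcc a b ⊆ I := fun a ha b hb => hI.uIcc_subset ha hb
  have hint : ∀ a ∈ I, ∀ b ∈ I, IntervalIntegrable A MeasureTheory.volume a b :=
    fun a ha b hb => (hA.mono (hIcc a ha b hb)).intervalIntegrable
  have hBcont : ∀ t ∈ I, ContinuousOn B (Set.uIcc t₀ t) := fun t ht =>
    intervalIntegral.continuousOn_primitive_interval' (hint t₀ ht₀ t ht) Set.left_mem_uIcc
  -- A x commutes with B s
  have hcommB : ∀ x ∈ I, ∀ s ∈ I, A x * B s = B s * A x := by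
    intro x hx s hs
    have hL : A x * B s = ∫ τ in t₀..s, A x * A τ := by
      have := (LinearMap.mulLeft ℝ (A x)).toContinuousLinearMap.intervalIntegral_comp_comm
        (hint t₀ ht₀ s hs)
      exact this.symm
    have hR : B s * A x = ∫ τ in t₀..s, A τ * A x := by
      have := (LinearMap.mulRight ℝ (A x)).toContinuousLinearMap.intervalIntegral_comp_comm
        (hint t₀ ht₀ s hs)
      exact this.symm
    rw [hL, hR]
    exact intervalIntegral.integral_congr fun τ hτ =>
      hcomm x hx τ (hIcc t₀ ht₀ s hs hτ)
  -- derivative of B at interior points of subintervals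
  have hBd : ∀ t ∈ I, ∀ x ∈ Set.Ioo (min t₀ t) (max t₀ t), HasDerivAt B (A x) x := by
    intro t ht x hx
    have hsub : Set.Ioo (min t₀ t) (max t₀ t) ⊆ I := by
      intro y hy
      exact hIcc t₀ ht₀ t ht (by simpa [Set.uIcc] using Set.Ioo_subset_Icc_self hy)
    have hAx : ContinuousAt A x :=
      (hA.mono hsub).continuousAt (Ioo_mem_nhds hx.1 hx.2)
    exact intervalIntegral.integral_hasDerivAt_right (hint t₀ ht₀ x (hsub hx))
      ((hA.mono hsub).stronglyMeasurableAtFilter isOpen_Ioo x hx) hAx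
  -- product rule for matrix-valued functions (sup norm is not a ring norm,
  -- so we go through continuous linear maps)
  have mul2 : ∀ {f g : ℝ → Matrix (Fin d) (Fin d) ℝ}
      {f' g' : Matrix (Fin d) (Fin d) ℝ} {x : ℝ}, HasDerivAt f f' x → HasDerivAt g g' x →
      HasDerivAt (fun s => f s * g s) (f' * g x + f x * g') x := by
    intro f g f' g' x hf hg
    let lm : Matrix (Fin d) (Fin d) ℝ →ₗ[ℝ]
        (Matrix (Fin d) (Fin d) ℝ →L[ℝ] Matrix (Fin d) (Fin d) ℝ) :=
      { toFun := fun a => (LinearMap.mulLeft ℝ a).toContinuousLinearMap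
        map_add' := by intro a b; ext c; simp [add_mul]
        map_smul' := by intro r a; ext c; simp [smul_mul_assoc] }
    let L := lm.toContinuousLinearMap
    have hc : HasDerivAt (fun s => L (f s)) (L f') x :=
      @HasFDerivAt.comp_hasDerivAt ℝ _ (Matrix (Fin d) (Fin d) ℝ) _ _
        (@ContinuousLinearMap ℝ ℝ _ _ (RingHom.id ℝ) (Matrix (Fin d) (Fin d) ℝ)
          PseudoMetricSpace.toUniformSpace.toTopologicalSpace _ (Matrix (Fin d) (Fin d) ℝ)
          PseudoMetricSpace.toUniformSpace.toTopologicalSpace _ _ _) _ _ f f' x L L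
        (L.hasFDerivAt (x := f x)) hf
    have h := hc.clm_apply hg
    exact h
  -- derivative of powers of B
  have hpow : ∀ (m : ℕ) (x : ℝ), x ∈ I → HasDerivAt B (A x) x →
      HasDerivAt (fun s => B s ^ (m + 1)) (((m : ℝ) + 1) • (A x * B x ^ m)) x := by
    intro m
    induction m with
    | zero =>
      intro x hx hBx
      simpa using hBx
    | succ m ih =>
      intro x hx hBx
      have h := mul2 (ih x hx hBx) hBx
      have hc : A x * B x = B x * A x := hcommB x hx x hx
      have hcp : A x * B x ^ (m + 1) = B x ^ (m + 1) * A x :=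
        ((Commute.pow_right hc (m + 1)))
      have heq : (((m : ℝ) + 1) • (A x * B x ^ m)) * B x + B x ^ (m + 1) * A x
          = ((m : ℝ) + 1 + 1) • (A x * B x ^ (m + 1)) := by
        rw [smul_mul_assoc, mul_assoc, ← pow_succ, ← hcp]
        conv_rhs => rw [add_smul, one_smul]
      rw [heq] at h
      push_cast
      simpa only [← pow_succ] using h
  intro n
  induction n with
  | zero =>
    intro t ht
    simp [pbIter]
  | succ n ih =>
    intro t ht
    have hsub : Set.uIcc t₀ t ⊆ I := hIcc t₀ ht₀ t ht
    set g : ℝ → Matrix (Fin d) (Fin d) ℝ :=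
      fun s => (((n + 1).factorial : ℝ))⁻¹ • B s ^ (n + 1) with hgdef
    have hBc := hBcont t ht
    have hderiv : ∀ x ∈ Set.Ioo (min t₀ t) (max t₀ t),
        HasDerivWithinAt g (((n.factorial : ℝ))⁻¹ • (A x * B x ^ n)) (Set.Ioi x) x := by
      intro x hx
      have hxI : x ∈ I := hsub (by simpa [Set.uIcc] using Set.Ioo_subset_Icc_self hx)
      have hd := (hpow n x hxI (hBd t ht x hx)).const_smul (((n + 1).factorial : ℝ))⁻¹
      have hval : (((n + 1).factorial : ℝ))⁻¹ • (((n : ℝ) + 1) • (A x * B x ^ n))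
          = ((n.factorial : ℝ))⁻¹ • (A x * B x ^ n) := by
        rw [smul_smul]
        congr 1
        rw [Nat.factorial_succ]
        push_cast
        rw [mul_inv]
        field_simp
      rw [hval] at hd
      exact hd.hasDerivWithinAt
    have hintg : IntervalIntegrable (fun τ => ((n.factorial : ℝ))⁻¹ • (A τ * B τ ^ n))
        MeasureTheory.volume t₀ t :=
      ContinuousOn.intervalIntegrable (u := fun τ => ((n.factorial : ℝ))⁻¹ • (A τ * B τ ^ n))
        (by exact (continuousOn_const (c := ((n.factorial : ℝ))⁻¹)).smul ((hA.mono hsub).mul (hBc.pow n)))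
    have hftc : (∫ τ in t₀..t, ((n.factorial : ℝ))⁻¹ • (A τ * B τ ^ n)) = g t - g t₀ :=
      intervalIntegral.integral_eq_sub_of_hasDeriv_right
        (by exact (continuousOn_const (c := (((n + 1).factorial : ℝ))⁻¹)).smul (hBc.pow (n + 1)))
        hderiv hintg
    have hBt₀ : B t₀ = 0 := intervalIntegral.integral_same
    calc pbIter A t₀ (n + 1) t = ∫ τ in t₀..t, A τ * pbIter A t₀ n τ := by rw [pbIter]
      _ = ∫ τ in t₀..t, ((n.factorial : ℝ))⁻¹ • (A τ * B τ ^ n) :=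
          intervalIntegral.integral_congr fun τ hτ => by
            rw [ih τ (hsub hτ), mul_smul_comm]
      _ = g t - g t₀ := hftc
      _ = (((n + 1).factorial : ℝ))⁻¹ • B t ^ (n + 1) := by
          simp [hgdef, hBt₀, zero_pow (Nat.succ_ne_zero n)]
end

section
/- Let A be a continuous matrix-valued function on an interval I containing t₀ such that, for every t ∈ I, the matrix A(t) commutes with the integral ∫_{t₀}^t A(τ) dτ. Then the iterated Peano–Baker integrals satisfy I_n(t) = (1/n!) · (∫_{t₀}^t A(τ) dτ)^n for all t ∈ I and all n ≥ 0. -/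
attribute [local instance] Matrix.normedAddCommGroup Matrix.normedSpace

open MeasureTheory Set intervalIntegral

section aux

variable {d : ℕ}

/-- Multiplication of matrices as a continuous bilinear map (w.r.t. the sup norm). -/
noncomputable def mulCLM :
    Matrix (Fin d) (Fin d) ℝ →L[ℝ] Matrix (Fin d) (Fin d) ℝ →L[ℝ] Matrix (Fin d) (Fin d) ℝ :=
  LinearMap.toContinuousLinearMap <|
    (LinearMap.toContinuousLinearMap :
        (Matrix (Fin d) (Fin d) ℝ →ₗ[ℝ] Matrix (Fin d) (Fin d) ℝ) ≃ₗ[ℝ] _).toLinearMap.comp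
      (LinearMap.mul ℝ (Matrix (Fin d) (Fin d) ℝ))

@[simp] lemma mulCLM_apply (a b : Matrix (Fin d) (Fin d) ℝ) : mulCLM a b = a * b := by
  simp [mulCLM]

lemma hasDerivWithinAt_matmul {f g : ℝ → Matrix (Fin d) (Fin d) ℝ}
    {f' g' : Matrix (Fin d) (Fin d) ℝ} {s : Set ℝ} {x : ℝ}
    (hf : HasDerivWithinAt f f' s x) (hg : HasDerivWithinAt g g' s x) :
    HasDerivWithinAt (fun u => f u * g u) (f' * g x + f x * g') s x := by
  have hb : IsBoundedBilinearMap ℝ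
      (fun p : Matrix (Fin d) (Fin d) ℝ × Matrix (Fin d) (Fin d) ℝ => mulCLM p.1 p.2) :=
    (mulCLM (d := d)).isBoundedBilinearMap
  have h := (hb.hasFDerivAt (f x, g x)).comp_hasDerivWithinAt x (hf.prodMk hg)
  have heq : (hb.deriv (f x, g x)) (f', g') = f' * g x + f x * g' := by
    rw [hb.deriv_apply]; simp [add_comm]
  rw [heq] at h
  exact h

/-- Derivative of powers of a matrix-valued function, assuming commutation. -/
lemma hasDerivWithinAt_matpow {B : ℝ → Matrix (Fin d) (Fin d) ℝ}
    {D : Matrix (Fin d) (Fin d) ℝ} {s : Set ℝ} {x : ℝ}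
    (hB : HasDerivWithinAt B D s x) (hc : D * B x = B x * D) (m : ℕ) :
    HasDerivWithinAt (fun u => B u ^ (m + 1)) ((m + 1 : ℕ) • (D * B x ^ m)) s x := by
  induction m with
  | zero => simpa using hB
  | succ m ih =>
    have h := hasDerivWithinAt_matmul hB ih
    have heq : D * B x ^ (m + 1) + B x * ((m + 1 : ℕ) • (D * B x ^ m))
        = (m + 2 : ℕ) • (D * B x ^ (m + 1)) := by
      have hBD : B x * (D * B x ^ m) = D * B x ^ (m + 1) := by
        rw [← mul_assoc, ← hc, mul_assoc, ← pow_succ']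
      rw [mul_smul_comm, hBD, add_comm (D * B x ^ (m + 1)), ← succ_nsmul]
    have h2 : HasDerivWithinAt (fun u => B u ^ (m + 1 + 1))
        (D * B x ^ (m + 1) + B x * ((m + 1 : ℕ) • (D * B x ^ m))) s x := by
      have : (fun u => B u ^ (m + 1 + 1)) = fun u => B u * B u ^ (m + 1) := by
        funext u; rw [← pow_succ']
      rw [this]; exact h
    rw [heq] at h2
    exact h2

end aux

noncomputable instance matENormedAddMonoid {d : ℕ} : ENormedAddMonoid (Matrix (Fin d) (Fin d) ℝ) :=
  NormedAddGroup.toENormedAddMonoid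

instance matPMS {d : ℕ} : TopologicalSpace.PseudoMetrizableSpace (Matrix (Fin d) (Fin d) ℝ) :=
  inferInstanceAs (TopologicalSpace.PseudoMetrizableSpace (Fin d → Fin d → ℝ))

theorem stmt3 {d : ℕ} (hd : 1 ≤ d) (A : ℝ → Matrix (Fin d) (Fin d) ℝ)
    (I : Set ℝ) (hI : I.OrdConnected) (t₀ : ℝ) (ht₀ : t₀ ∈ I)
    (hA : ContinuousOn A I)
    (hcomm : ∀ t ∈ I, A t * (∫ τ in t₀..t, A τ) = (∫ τ in t₀..t, A τ) * A t) :
    ∀ n : ℕ, ∀ t ∈ I,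
      pbIter A t₀ n t = ((n.factorial : ℝ))⁻¹ • (∫ τ in t₀..t, A τ) ^ n := by
  intro n
  induction n with
  | zero => intro t ht; simp [pbIter]
  | succ n ih =>
    intro t ht
    set B : ℝ → Matrix (Fin d) (Fin d) ℝ := fun u => ∫ τ in t₀..u, A τ with hBdef
    have hsub : uIcc t₀ t ⊆ I := hI.uIcc_subset ht₀ ht
    have hAuIcc : ContinuousOn A (uIcc t₀ t) := hA.mono hsub
    -- FTC-1: B has derivative A within uIcc t₀ t
    have hB : ∀ τ ∈ uIcc t₀ t, HasDerivWithinAt B (A τ) (uIcc t₀ t) τ := by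
      intro τ hτ
      haveI : Fact (τ ∈ uIcc t₀ t) := ⟨hτ⟩
      have hint : IntervalIntegrable A volume t₀ τ :=
        (hAuIcc.mono (uIcc_subset_uIcc left_mem_uIcc hτ)).intervalIntegrable
      exact integral_hasDerivWithinAt_right hint
        (hAuIcc.stronglyMeasurableAtFilter_nhdsWithin measurableSet_uIcc τ)
        (hAuIcc τ hτ)
    have hBcont : ContinuousOn B (uIcc t₀ t) := fun τ hτ => (hB τ hτ).continuousWithinAt
    have hBt₀ : B t₀ = 0 := integral_same
    -- commutation on uIcc
    have hc : ∀ τ ∈ uIcc t₀ t, A τ * B τ = B τ * A τ := fun τ hτ => hcomm τ (hsub hτ)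
    -- derivative of B^(n+1) within uIcc
    have hpow : ∀ τ ∈ uIcc t₀ t, HasDerivWithinAt (fun u => B u ^ (n + 1))
        (((n : ℝ) + 1) • (A τ * B τ ^ n)) (uIcc t₀ t) τ := by
      intro τ hτ
      have h := hasDerivWithinAt_matpow (hB τ hτ) (hc τ hτ) n
      rw [← Nat.cast_smul_eq_nsmul ℝ] at h
      push_cast at h
      exact h
    -- FTC-2
    have hintg : IntervalIntegrable (fun τ => ((n : ℝ) + 1) • (A τ * B τ ^ n)) volume t₀ t := by
      apply ContinuousOn.intervalIntegrable
      exact ((hAuIcc.mul (hBcont.pow n)).const_smul ((n : ℝ) + 1))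
    have hFTC : (∫ τ in t₀..t, ((n : ℝ) + 1) • (A τ * B τ ^ n)) = B t ^ (n + 1) := by
      have := integral_eq_sub_of_hasDeriv_right
        (f := fun u => B u ^ (n + 1)) (f' := fun τ => ((n : ℝ) + 1) • (A τ * B τ ^ n))
        (hBcont.pow (n + 1))
        (fun x hx => by
          have hxmem : x ∈ uIcc t₀ t := Ioo_subset_Icc_self hx
          refine (hpow x hxmem).mono_of_mem_nhdsWithin ?_
          rw [mem_nhdsWithin]
          refine ⟨Iio (max t₀ t), isOpen_Iio, hx.2, fun y hy => ?_⟩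
          exact ⟨hx.1.le.trans hy.2.le, hy.1.le⟩
        ) hintg
      simpa [hBt₀, zero_pow (Nat.succ_ne_zero n)] using this
    -- put it together
    have hcongr : pbIter A t₀ (n + 1) t
        = ∫ τ in t₀..t, (n.factorial : ℝ)⁻¹ • (A τ * B τ ^ n) := by
      show (∫ τ in t₀..t, A τ * pbIter A t₀ n τ) = _
      apply integral_congr
      intro τ hτ
      show A τ * pbIter A t₀ n τ = (n.factorial : ℝ)⁻¹ • (A τ * B τ ^ n)
      rw [ih τ (hsub hτ), mul_smul_comm]
    rw [hcongr, intervalIntegral.integral_smul]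
    have hsm : (∫ τ in t₀..t, A τ * B τ ^ n)
        = ((n + 1 : ℝ))⁻¹ • B t ^ (n + 1) := by
      have h2 : ((n + 1 : ℝ)) • (∫ τ in t₀..t, A τ * B τ ^ n) = B t ^ (n + 1) := by
        rw [← hFTC, intervalIntegral.integral_smul]
      calc (∫ τ in t₀..t, A τ * B τ ^ n)
          = ((n + 1 : ℝ))⁻¹ • ((n + 1 : ℝ)) • (∫ τ in t₀..t, A τ * B τ ^ n) := by
            rw [smul_smul, inv_mul_cancel₀ (by positivity), one_smul]
        _ = ((n + 1 : ℝ))⁻¹ • B t ^ (n + 1) := by rw [h2]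
    rw [hsm, smul_smul]
    congr 1
    rw [Nat.factorial_succ]
    push_cast
    rw [mul_inv]
    ring
end

section
/- Let A be a continuous matrix-valued function on an interval I containing t₀ such that A(t) · A(s) = A(s) · A(t) for all t, s ∈ I. Then the Peano–Baker series sums to a matrix exponential: Σ_{n=0}^∞ I_n(t) = exp(∫_{t₀}^t A(τ) dτ) for every t ∈ I. -/
attribute [local instance] Matrix.normedAddCommGroup Matrix.normedSpace

open MeasureTheory Set intervalIntegral

noncomputable def matMulCLM (d : ℕ) : Matrix (Fin d) (Fin d) ℝ →L[ℝ]
    Matrix (Fin d) (Fin d) ℝ →L[ℝ] Matrix (Fin d) (Fin d) ℝ :=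
  LinearMap.mkContinuous₂ (LinearMap.mul ℝ _) d <| by
    intro x y
    rw [Matrix.norm_le_iff (by positivity)]
    intro i j
    calc ‖(x * y) i j‖ = ‖∑ k, x i k * y k j‖ := by rw [Matrix.mul_apply]
      _ ≤ ∑ k, ‖x i k * y k j‖ := norm_sum_le _ _
      _ ≤ ∑ _k : Fin d, ‖x‖ * ‖y‖ := Finset.sum_le_sum fun k _ => by
          rw [norm_mul]
          exact mul_le_mul (Matrix.norm_entry_le_entrywise_sup_norm x)
            (Matrix.norm_entry_le_entrywise_sup_norm y) (norm_nonneg _) (norm_nonneg _)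
      _ = d * ‖x‖ * ‖y‖ := by simp [mul_assoc]

@[simp] lemma matMulCLM_apply {d : ℕ} (x y : Matrix (Fin d) (Fin d) ℝ) :
    matMulCLM d x y = x * y := rfl

lemma hasDerivAt_matmul {d : ℕ} {b c : ℝ → Matrix (Fin d) (Fin d) ℝ}
    {b' c' : Matrix (Fin d) (Fin d) ℝ} {x : ℝ}
    (hb : HasDerivAt b b' x) (hc : HasDerivAt c c' x) :
    HasDerivAt (fun y => b y * c y) (b' * c x + b x * c') x := by
  letI : NormedAddCommGroup (Matrix (Fin d) (Fin d) ℝ →L[ℝ] Matrix (Fin d) (Fin d) ℝ) :=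
    ContinuousLinearMap.toNormedAddCommGroup
  letI : NormedSpace ℝ (Matrix (Fin d) (Fin d) ℝ →L[ℝ] Matrix (Fin d) (Fin d) ℝ) :=
    ContinuousLinearMap.toNormedSpace
  have h1 : HasDerivAt (fun y => matMulCLM d (b y)) (matMulCLM d b') x :=
    (matMulCLM d).hasFDerivAt.comp_hasDerivAt x hb
  exact h1.clm_apply hc
theorem stmt5 {d : ℕ} (hd : 1 ≤ d) (A : ℝ → Matrix (Fin d) (Fin d) ℝ)
    (I : Set ℝ) (hI : I.OrdConnected) (t₀ : ℝ) (ht₀ : t₀ ∈ I)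
    (hA : ContinuousOn A I)
    (hcomm : ∀ t ∈ I, ∀ s ∈ I, A t * A s = A s * A t) :
    ∀ t ∈ I, ∑' n : ℕ, pbIter A t₀ n t = NormedSpace.exp (∫ τ in t₀..t, A τ) := by
  intro t ht
  letI : ENormedAddMonoid (Matrix (Fin d) (Fin d) ℝ) := NormedAddGroup.toENormedAddMonoid
  letI : TopologicalSpace.PseudoMetrizableSpace (Matrix (Fin d) (Fin d) ℝ) :=
    inferInstanceAs (TopologicalSpace.PseudoMetrizableSpace (Fin d → Fin d → ℝ))
  set B : ℝ → Matrix (Fin d) (Fin d) ℝ := fun s => ∫ τ in t₀..s, A τ with hBdef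
  have hsub : ∀ s ∈ I, Set.uIcc t₀ s ⊆ I := fun s hs => hI.uIcc_subset ht₀ hs
  have hAint : ∀ s ∈ I, IntervalIntegrable A volume t₀ s := fun s hs =>
    (hA.mono (hsub s hs)).intervalIntegrable
  -- commutation of A x with B s
  have key : ∀ x ∈ I, ∀ s, Set.uIcc t₀ s ⊆ I → A x * B s = B s * A x := by
    intro x hx s hsI
    have hint : IntervalIntegrable A volume t₀ s := (hA.mono hsI).intervalIntegrable
    have h1 : A x * B s = ∫ τ in t₀..s, A x * A τ := by
      have := (matMulCLM d (A x)).intervalIntegral_comp_comm hint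
      exact this.symm
    have h2 : B s * A x = ∫ τ in t₀..s, A τ * A x := by
      have := ((matMulCLM d).flip (A x)).intervalIntegral_comp_comm hint
      exact this.symm
    rw [h1, h2]
    exact intervalIntegral.integral_congr fun τ hτ => hcomm x hx τ (hsI hτ)
  -- derivative of B at interior points of I
  have hBD : ∀ x ∈ interior I, HasDerivAt B (A x) x := by
    intro x hx
    exact intervalIntegral.integral_hasDerivAt_right (hAint x (interior_subset hx))
      (ContinuousOn.stronglyMeasurableAtFilter isOpen_interior (hA.mono interior_subset) x hx)
      ((hA.mono interior_subset).continuousAt (isOpen_interior.mem_nhds hx))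
  -- derivative of powers of B
  have hpow : ∀ (n : ℕ), ∀ x ∈ interior I,
      HasDerivAt (fun τ => B τ ^ (n + 1)) (((n : ℝ) + 1) • (A x * B x ^ n)) x := by
    intro n
    induction n with
    | zero =>
      intro x hx
      simpa using hBD x hx
    | succ n ih =>
      intro x hx
      have hc : A x * B x = B x * A x :=
        key x (interior_subset hx) x (hsub x (interior_subset hx))
      have h1 := hasDerivAt_matmul (hBD x hx) (ih x hx)
      have h2 : B x * (((n : ℝ) + 1) • (A x * B x ^ n)) =
          ((n : ℝ) + 1) • (A x * B x ^ (n + 1)) := by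
        rw [mul_smul_comm, ← mul_assoc, ← hc, mul_assoc, ← pow_succ']
      have h3 : (fun y => B y ^ (n + 1 + 1)) = fun y => B y * B y ^ (n + 1) := by
        funext y; rw [← pow_succ']
      have h4 : (((n : ℕ) + 1 : ℝ) + 1) • (A x * B x ^ (n + 1)) =
          A x * B x ^ (n + 1) + ((n : ℝ) + 1) • (A x * B x ^ (n + 1)) := by
        push_cast
        rw [add_smul, one_smul, add_comm]
      rw [h3]
      push_cast
      rw [h4, ← h2]
      exact h1
  -- main claim
  have main : ∀ n, ∀ s ∈ Set.uIcc t₀ t, pbIter A t₀ n s = ((n.factorial : ℝ))⁻¹ • B s ^ n := by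
    intro n
    induction n with
    | zero => intro s _; simp [pbIter]
    | succ n ih =>
      intro s hs
      have hsub' : Set.uIcc t₀ s ⊆ Set.uIcc t₀ t :=
        Set.uIcc_subset_uIcc Set.left_mem_uIcc hs
      have hsI : Set.uIcc t₀ s ⊆ I := hsub'.trans (hsub t ht)
      have hAcs : ContinuousOn A (Set.uIcc t₀ s) := hA.mono hsI
      have hBconts : ContinuousOn B (Set.uIcc t₀ s) :=
        intervalIntegral.continuousOn_primitive_interval' hAcs.intervalIntegrable
          Set.left_mem_uIcc
      have hfc : ContinuousOn (fun τ => A τ * B τ ^ n) (Set.uIcc t₀ s) :=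
        hAcs.mul (hBconts.pow n)
      have hint : IntervalIntegrable (fun τ => A τ * B τ ^ n) volume t₀ s :=
        hfc.intervalIntegrable
      have hIoo' : Set.Ioo (min t₀ s) (max t₀ s) ⊆ interior I :=
        interior_maximal (fun x hx => hsI (Set.Ioo_subset_Icc_self hx)) isOpen_Ioo
      have hFTC := intervalIntegral.integral_eq_sub_of_hasDeriv_right
        (f := fun τ => B τ ^ (n + 1)) (f' := fun τ => ((n : ℝ) + 1) • (A τ * B τ ^ n))
        (hBconts.pow _)
        (fun x hx => (hpow n x (hIoo' hx)).hasDerivWithinAt)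
        (hint.smul (((n:ℝ)+1)))
      have hB0 : B t₀ = 0 := intervalIntegral.integral_same
      beta_reduce at hFTC
      rw [intervalIntegral.integral_smul, hB0, zero_pow (Nat.succ_ne_zero n), sub_zero] at hFTC
      have hval : (∫ τ in t₀..s, A τ * B τ ^ n) = ((n : ℝ) + 1)⁻¹ • B s ^ (n + 1) := by
        rw [← hFTC, smul_smul, inv_mul_cancel₀ (by positivity), one_smul]
      have hrw : pbIter A t₀ (n + 1) s
          = ∫ τ in t₀..s, ((n.factorial : ℝ))⁻¹ • (A τ * B τ ^ n) := by
        show (∫ τ in t₀..s, A τ * pbIter A t₀ n τ) = _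
        exact intervalIntegral.integral_congr fun τ hτ => by
          rw [ih τ (hsub' hτ), mul_smul_comm]
      rw [hrw, intervalIntegral.integral_smul, hval, smul_smul]
      congr 1
      rw [Nat.factorial_succ]
      push_cast
      rw [mul_inv]
      ring
  calc ∑' n : ℕ, pbIter A t₀ n t = ∑' n : ℕ, ((n.factorial : ℝ))⁻¹ • B t ^ n :=
        tsum_congr fun n => main n t Set.right_mem_uIcc
    _ = NormedSpace.exp (B t) := by rw [NormedSpace.exp_eq_tsum (𝕂 := ℝ)]
end

section
/- Let A be a continuous matrix-valued function on an interval I containing t₀. Then the Peano–Baker series Σ_{n=0}^∞ I_n(t) converges compactly on I: for every compact subinterval J ⊆ I containing t₀, the sequence of partial sums Σ_{k=0}^n I_k(t) converges uniformly in t ∈ J (in any matrix norm) as n → ∞. In particular, for every t ∈ I the series Σ_{n=0}^∞ I_n(t) converges. -/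
attribute [local instance] Matrix.normedAddCommGroup Matrix.normedSpace

noncomputable instance pbENormedAddMonoid (d : ℕ) : ENormedAddMonoid (Matrix (Fin d) (Fin d) ℝ) :=
  NormedAddCommGroup.toENormedAddCommMonoid.toENormedAddMonoid

open Set MeasureTheory intervalIntegral in
lemma pb_norm_mul_le {d : ℕ} (X Y : Matrix (Fin d) (Fin d) ℝ) :
    ‖X * Y‖ ≤ d * ‖X‖ * ‖Y‖ := by
  rcases Nat.eq_zero_or_pos d with h | h
  · subst h
    have : X * Y = 0 := Subsingleton.elim _ _
    simp [this]
  · have hnn : (0:ℝ) ≤ d * ‖X‖ * ‖Y‖ := by positivity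
    rw [Matrix.norm_le_iff hnn]
    intro i j
    calc ‖(X * Y) i j‖ = ‖∑ k, X i k * Y k j‖ := by rw [Matrix.mul_apply]
      _ ≤ ∑ k, ‖X i k * Y k j‖ := norm_sum_le _ _
      _ ≤ ∑ _k : Fin d, ‖X‖ * ‖Y‖ := by
          refine Finset.sum_le_sum fun k _ => ?_
          rw [norm_mul]
          exact mul_le_mul (Matrix.norm_entry_le_entrywise_sup_norm X)
            (Matrix.norm_entry_le_entrywise_sup_norm Y) (norm_nonneg _) (norm_nonneg _)
      _ = d * ‖X‖ * ‖Y‖ := by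
          simp [Finset.sum_const, mul_assoc]

open Set MeasureTheory intervalIntegral in
lemma pb_int_abs_pow (t₀ t : ℝ) (n : ℕ) :
    ∫ τ in t₀..t, |τ - t₀| ^ n = (t - t₀) * |t - t₀| ^ n / (n + 1) := by
  rcases le_total t₀ t with h | h
  · have hcongr : EqOn (fun τ => |τ - t₀| ^ n) (fun τ => (τ - t₀) ^ n) (uIcc t₀ t) := by
      intro τ hτ
      rw [uIcc_of_le h] at hτ
      simp only
      rw [abs_of_nonneg (by linarith [hτ.1])]
    rw [intervalIntegral.integral_congr hcongr]
    have := intervalIntegral.integral_comp_sub_right (a := t₀) (b := t) (fun u => u ^ n) t₀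
    rw [this, sub_self, integral_pow]
    rw [abs_of_nonneg (by linarith)]
    ring
  · have hcongr : EqOn (fun τ => |τ - t₀| ^ n) (fun τ => (t₀ - τ) ^ n) (uIcc t₀ t) := by
      intro τ hτ
      rw [uIcc_of_ge h] at hτ
      simp only
      rw [abs_of_nonpos (by linarith [hτ.2]), neg_sub]
    rw [intervalIntegral.integral_congr hcongr]
    have := intervalIntegral.integral_comp_sub_left (a := t₀) (b := t) (fun u => u ^ n) t₀
    rw [this, sub_self, integral_pow]
    rw [abs_of_nonpos (by linarith), neg_sub]
    ring

open Set MeasureTheory intervalIntegral in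
lemma pb_main {d : ℕ} (A : ℝ → Matrix (Fin d) (Fin d) ℝ) (t₀ a b : ℝ)
    (ha : a ≤ t₀) (hb : t₀ ≤ b) (hA : ContinuousOn A (Icc a b))
    (C : ℝ) (hC0 : 0 ≤ C) (hC : ∀ t ∈ Icc a b, ‖A t‖ ≤ C) (n : ℕ) :
    ContinuousOn (pbIter A t₀ n) (Icc a b) ∧
      ∀ t ∈ Icc a b, ‖pbIter A t₀ n t‖ ≤
        ‖(1 : Matrix (Fin d) (Fin d) ℝ)‖ * (d * C * |t - t₀|) ^ n / n.factorial := by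
  have hab : a ≤ b := ha.trans hb
  have ht₀ : t₀ ∈ Icc a b := ⟨ha, hb⟩
  set M : ℝ := ‖(1 : Matrix (Fin d) (Fin d) ℝ)‖ with hM
  have hM0 : 0 ≤ M := norm_nonneg _
  induction n with
  | zero =>
      constructor
      · exact continuousOn_const
      · intro t _; simp [pbIter, hM]
  | succ n ih =>
      obtain ⟨ihc, ihb⟩ := ih
      have hg : ContinuousOn (fun τ => A τ * pbIter A t₀ n τ) (Icc a b) := hA.mul ihc
      have hgint : ∀ s t : ℝ, s ∈ Icc a b → t ∈ Icc a b →
          IntervalIntegrable (fun τ => A τ * pbIter A t₀ n τ) volume s t := by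
        intro s t hs ht
        exact (hg.mono (uIcc_subset_Icc hs ht)).intervalIntegrable
      constructor
      · have := continuousOn_primitive_interval' (μ := volume) (b₁ := a) (b₂ := b)
          (f := fun τ => A τ * pbIter A t₀ n τ) (hgint a b ⟨le_rfl, hab⟩ ⟨hab, le_rfl⟩)
          (by rw [uIcc_of_le hab]; exact ht₀)
        rw [uIcc_of_le hab] at this
        exact this
      · intro t ht
        have hsub : uIcc t₀ t ⊆ Icc a b := uIcc_subset_Icc ht₀ ht
        have hK : (0:ℝ) ≤ (d:ℝ) * C := by positivity
        -- pointwise bound on the interval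
        have hbd : ∀ τ ∈ uIcc t₀ t,
            ‖A τ * pbIter A t₀ n τ‖ ≤ (d * C) * (M * (d * C * |τ - t₀|) ^ n / n.factorial) := by
          intro τ hτ
          have hτ' : τ ∈ Icc a b := hsub hτ
          calc ‖A τ * pbIter A t₀ n τ‖ ≤ d * ‖A τ‖ * ‖pbIter A t₀ n τ‖ := pb_norm_mul_le _ _
            _ ≤ d * C * (M * (d * C * |τ - t₀|) ^ n / n.factorial) := by
                apply mul_le_mul
                · exact mul_le_mul_of_nonneg_left (hC τ hτ') (by positivity)
                · exact ihb τ hτ'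
                · exact norm_nonneg _
                · exact hK
        have hGcont : Continuous (fun τ : ℝ =>
            (d * C) * (M * (d * C * |τ - t₀|) ^ n / n.factorial)) := by
          fun_prop
        have key : ‖∫ τ in t₀..t, A τ * pbIter A t₀ n τ‖ ≤
            |∫ τ in t₀..t, (d * C) * (M * (d * C * |τ - t₀|) ^ n / n.factorial)| := by
          apply intervalIntegral.norm_integral_le_abs_of_norm_le _ (hGcont.intervalIntegrable _ _)
          · filter_upwards [ae_restrict_mem measurableSet_uIoc] with τ hτ
            exact hbd τ (uIoc_subset_uIcc hτ)
        have hval : (∫ τ in t₀..t, (d * C) * (M * (d * C * |τ - t₀|) ^ n / n.factorial))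
            = (d * C) * M * (d * C) ^ n / n.factorial *
              ((t - t₀) * |t - t₀| ^ n / (n + 1)) := by
          have : (fun τ : ℝ => (d * C) * (M * (d * C * |τ - t₀|) ^ n / n.factorial))
              = fun τ : ℝ => ((d * C) * M * (d * C) ^ n / n.factorial) * |τ - t₀| ^ n := by
            funext τ
            rw [mul_pow]
            ring
          rw [this, intervalIntegral.integral_const_mul, pb_int_abs_pow]
        rw [show pbIter A t₀ (n+1) t = ∫ τ in t₀..t, A τ * pbIter A t₀ n τ from rfl]
        refine key.trans ?_
        rw [hval, abs_mul]
        have h1 : |(d * C) * M * (d * C) ^ n / n.factorial|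
            = (d * C) * M * (d * C) ^ n / n.factorial := by
          rw [abs_of_nonneg]; positivity
        have h2 : |(t - t₀) * |t - t₀| ^ n / (n + 1)| = |t - t₀| ^ (n + 1) / (n + 1) := by
          rw [abs_div, abs_mul, abs_pow, abs_abs, ← pow_succ',
            abs_of_nonneg (by positivity : (0:ℝ) ≤ (n:ℝ) + 1)]
        rw [h1, h2]
        have hfacs : (((n+1).factorial : ℕ) : ℝ) = ((n:ℝ) + 1) * n.factorial := by
          push_cast [Nat.factorial_succ]; ring
        have hfac : (0:ℝ) < n.factorial := by positivity
        have hn1 : (0:ℝ) < (n:ℝ) + 1 := by positivity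
        apply le_of_eq
        rw [hfacs, mul_pow, mul_pow]
        field_simp
        ring

open Set MeasureTheory Filter in
theorem stmt7 {d : ℕ} (hd : 1 ≤ d) (A : ℝ → Matrix (Fin d) (Fin d) ℝ)
    (I : Set ℝ) (hI : I.OrdConnected) (t₀ : ℝ) (ht₀ : t₀ ∈ I)
    (hA : ContinuousOn A I) :
    (∀ J : Set ℝ, J ⊆ I → IsCompact J → J.OrdConnected → t₀ ∈ J →
      TendstoUniformlyOn (fun n t => ∑ k ∈ Finset.range (n + 1), pbIter A t₀ k t)
        (fun t => ∑' k : ℕ, pbIter A t₀ k t) Filter.atTop J) ∧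
    (∀ t ∈ I, Summable fun n : ℕ => pbIter A t₀ n t) := by
  -- A general lemma for `Icc a b ⊆ I` with `a ≤ t₀ ≤ b`.
  have main : ∀ a b : ℝ, a ≤ t₀ → t₀ ≤ b → Icc a b ⊆ I →
      TendstoUniformlyOn (fun n t => ∑ k ∈ Finset.range n, pbIter A t₀ k t)
        (fun t => ∑' k : ℕ, pbIter A t₀ k t) Filter.atTop (Icc a b) ∧
      (∀ t ∈ Icc a b, Summable fun n : ℕ => pbIter A t₀ n t) := by
    intro a b ha hb hJI
    have hA' : ContinuousOn A (Icc a b) := hA.mono hJI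
    obtain ⟨C₀, hC₀⟩ := (isCompact_Icc (a := a) (b := b)).exists_bound_of_continuousOn hA'
    set C : ℝ := max C₀ 0 with hCdef
    have hC0 : 0 ≤ C := le_max_right _ _
    have hC : ∀ t ∈ Icc a b, ‖A t‖ ≤ C := fun t ht => (hC₀ t ht).trans (le_max_left _ _)
    set M : ℝ := ‖(1 : Matrix (Fin d) (Fin d) ℝ)‖ with hM
    set R : ℝ := max (b - t₀) (t₀ - a) with hR
    have hR0 : 0 ≤ R := le_trans (by linarith) (le_max_left _ _)
    have habs : ∀ t ∈ Icc a b, |t - t₀| ≤ R := by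
      intro t ht
      rw [abs_le]
      constructor
      · have := le_max_right (b - t₀) (t₀ - a); have := ht.1; simp only [hR]
        have h' : t₀ - a ≤ R := le_max_right _ _
        linarith [ht.1]
      · have h' : b - t₀ ≤ R := le_max_left _ _
        linarith [ht.2]
    set u : ℕ → ℝ := fun n => M * (d * C * R) ^ n / n.factorial with hu
    have hus : Summable u := by
      have := Real.summable_pow_div_factorial (d * C * R)
      simpa [hu, mul_div_assoc] using this.mul_left M
    have hbound : ∀ (n : ℕ) (t : ℝ), t ∈ Icc a b → ‖pbIter A t₀ n t‖ ≤ u n := by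
      intro n t ht
      have h := (pb_main A t₀ a b ha hb hA' C hC0 hC n).2 t ht
      refine h.trans ?_
      rw [hu]
      apply div_le_div_of_nonneg_right ?_ (by positivity)
      apply mul_le_mul_of_nonneg_left ?_ (norm_nonneg _)
      apply pow_le_pow_left₀ (by positivity)
      exact mul_le_mul_of_nonneg_left (habs t ht) (by positivity)
    have hTU : TendstoUniformlyOn (fun n t => ∑ k ∈ Finset.range n, pbIter A t₀ k t)
        (fun t => ∑' k : ℕ, pbIter A t₀ k t) Filter.atTop (Icc a b) :=
      tendstoUniformlyOn_tsum_nat hus hbound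
    refine ⟨hTU, fun t ht => ?_⟩
    exact Summable.of_norm_bounded hus fun n => hbound n t ht
  constructor
  · intro J hJI hJc hJo ht₀J
    have hJconn : IsConnected J := ⟨⟨t₀, ht₀J⟩, hJo.isPreconnected⟩
    have hJ : J = Icc (sInf J) (sSup J) := eq_Icc_of_connected_compact hJconn hJc
    have ha : sInf J ≤ t₀ := csInf_le hJc.bddBelow ht₀J
    have hb : t₀ ≤ sSup J := le_csSup hJc.bddAbove ht₀J
    have h := (main (sInf J) (sSup J) ha hb (by rw [← hJ]; exact hJI)).1
    rw [hJ]
    -- shift index: partial sums over `range (n+1)`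
    intro v hv
    exact (tendsto_add_atTop_nat 1).eventually (h v hv)
  · intro t ht
    rcases le_total t₀ t with h | h
    · have hsub : Icc t₀ t ⊆ I := hI.out ht₀ ht
      exact (main t₀ t le_rfl h hsub).2 t ⟨h, le_rfl⟩
    · have hsub : Icc t t₀ ⊆ I := hI.out ht ht₀
      exact (main t t₀ h le_rfl hsub).2 t ⟨le_rfl, h⟩
end

section
/- Let A be a continuous matrix-valued function on an interval I containing t₀, and let Φ_A(t; t₀) denote the sum of the Peano–Baker series. Then t ↦ Φ_A(t; t₀) is differentiable on I and solves the homogeneous linear matrix initial value problem: d/dt Φ_A(t; t₀) = A(t) · Φ_A(t; t₀) for all t ∈ I, with Φ_A(t₀; t₀) = 1. -/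
attribute [local instance] Matrix.normedAddCommGroup Matrix.normedSpace

open MeasureTheory Set Filter
open scoped Topology
open scoped ENNReal NNReal

namespace PBaux

variable {d : ℕ}

instance (d : ℕ) : TopologicalSpace.PseudoMetrizableSpace (Matrix (Fin d) (Fin d) ℝ) :=
  inferInstanceAs (TopologicalSpace.PseudoMetrizableSpace (Fin d → Fin d → ℝ))

instance (d : ℕ) : ENormedAddCommMonoid (Matrix (Fin d) (Fin d) ℝ) :=
  NormedAddCommGroup.toENormedAddCommMonoid

lemma norm_one_le (hd : 1 ≤ d) : ‖(1 : Matrix (Fin d) (Fin d) ℝ)‖ ≤ 1 := by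
  rw [Matrix.norm_le_iff zero_le_one]
  intro i j
  by_cases h : i = j <;> simp [Matrix.one_apply, h]

lemma norm_mul_le' (X Y : Matrix (Fin d) (Fin d) ℝ) : ‖X * Y‖ ≤ d * ‖X‖ * ‖Y‖ := by
  have h0 : (0:ℝ) ≤ (d:ℝ) * ‖X‖ * ‖Y‖ := by positivity
  rw [Matrix.norm_le_iff h0]
  intro i j
  calc ‖(X * Y) i j‖ = ‖∑ k, X i k * Y k j‖ := by rw [Matrix.mul_apply]
    _ ≤ ∑ k, ‖X i k * Y k j‖ := norm_sum_le _ _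
    _ ≤ ∑ _k : Fin d, ‖X‖ * ‖Y‖ := by
        refine Finset.sum_le_sum fun k _ => ?_
        rw [norm_mul]
        exact mul_le_mul (Matrix.norm_entry_le_entrywise_sup_norm X)
          (Matrix.norm_entry_le_entrywise_sup_norm Y) (norm_nonneg _) (norm_nonneg _)
    _ = d * ‖X‖ * ‖Y‖ := by
        rw [Finset.sum_const, Finset.card_univ, Fintype.card_fin, nsmul_eq_mul]; ring

lemma abs_integral_abs_pow (n : ℕ) (t₀ σ : ℝ) :
    |∫ τ in t₀..σ, |τ - t₀| ^ n| = |σ - t₀| ^ (n + 1) / (n + 1) := by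
  have h1 : (∫ τ in t₀..σ, |τ - t₀| ^ n) = ∫ u in (t₀ - t₀)..(σ - t₀), |u| ^ n :=
    intervalIntegral.integral_comp_sub_right (fun u => |u| ^ n) t₀
  rw [sub_self] at h1
  rw [h1]
  have hn : (0:ℝ) < (n:ℝ) + 1 := by positivity
  rcases le_total 0 (σ - t₀) with h | h
  · have h2 : (∫ u in (0:ℝ)..(σ - t₀), |u| ^ n) = ∫ u in (0:ℝ)..(σ - t₀), u ^ n :=
      intervalIntegral.integral_congr fun u hu => by
        rw [Set.uIcc_of_le h] at hu
        rw [abs_of_nonneg hu.1]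
    rw [h2, integral_pow, zero_pow (Nat.succ_ne_zero n), sub_zero, abs_div, abs_pow,
      abs_of_nonneg hn.le]
  · have h2 : (∫ u in (0:ℝ)..(σ - t₀), |u| ^ n) = ∫ u in (0:ℝ)..(σ - t₀), (-u) ^ n :=
      intervalIntegral.integral_congr fun u hu => by
        rw [Set.uIcc_of_ge h] at hu
        rw [abs_of_nonpos hu.2]
    rw [h2, intervalIntegral.integral_comp_neg (fun u => u ^ n), neg_zero, integral_pow,
      zero_pow (Nat.succ_ne_zero n), zero_sub, neg_div, abs_neg, abs_div, abs_pow, abs_neg,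
      abs_of_nonneg hn.le]

variable {A : ℝ → Matrix (Fin d) (Fin d) ℝ} {t₀ c e : ℝ}

lemma contOn (ht₀ : t₀ ∈ Icc c e) (hA : ContinuousOn A (Icc c e)) (n : ℕ) :
    ContinuousOn (pbIter A t₀ n) (Icc c e) := by
  induction n with
  | zero => exact continuousOn_const
  | succ n ih =>
    have hce : c ≤ e := ht₀.1.trans ht₀.2
    have h1 : Set.uIcc c e = Icc c e := Set.uIcc_of_le hce
    have hf : ContinuousOn (fun τ => A τ * pbIter A t₀ n τ) (Icc c e) := hA.mul ih
    show ContinuousOn (fun t => ∫ τ in t₀..t, A τ * pbIter A t₀ n τ) (Icc c e)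
    rw [← h1]
    exact intervalIntegral.continuousOn_primitive_interval'
      ((h1 ▸ hf).intervalIntegrable) (h1 ▸ ht₀)

lemma normBound (hd : 1 ≤ d) (ht₀ : t₀ ∈ Icc c e) (hA : ContinuousOn A (Icc c e))
    {M : ℝ} (hM : ∀ σ ∈ Icc c e, (d : ℝ) * ‖A σ‖ ≤ M) (n : ℕ) :
    ∀ σ ∈ Icc c e, ‖pbIter A t₀ n σ‖ ≤ M ^ n * |σ - t₀| ^ n / n.factorial := by
  have hM0 : 0 ≤ M := le_trans (by positivity) (hM t₀ ht₀)
  induction n with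
  | zero => intro σ hσ; show ‖(1 : Matrix (Fin d) (Fin d) ℝ)‖ ≤ _; simpa using norm_one_le hd
  | succ n ih =>
    intro σ hσ
    have hsub : Set.uIoc t₀ σ ⊆ Icc c e :=
      Set.uIoc_subset_uIcc.trans ((Set.ordConnected_Icc).uIcc_subset ht₀ hσ)
    set g : ℝ → ℝ := fun τ => M * (M ^ n * |τ - t₀| ^ n / n.factorial) with hg
    have hg_cont : Continuous g := by
      have : Continuous fun τ : ℝ => |τ - t₀| ^ n := ((continuous_sub_right t₀).abs).pow n
      exact continuous_const.mul ((continuous_const.mul this).div_const _)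
    have key : ‖(∫ τ in t₀..σ, A τ * pbIter A t₀ n τ)‖ ≤ |∫ τ in t₀..σ, g τ| := by
      apply intervalIntegral.norm_integral_le_abs_of_norm_le _ (hg_cont.intervalIntegrable _ _)
      refine (ae_restrict_mem measurableSet_uIoc).mono fun τ hτ => ?_
      have hτ' : τ ∈ Icc c e := hsub hτ
      calc ‖A τ * pbIter A t₀ n τ‖ ≤ d * ‖A τ‖ * ‖pbIter A t₀ n τ‖ := norm_mul_le' _ _
        _ ≤ M * (M ^ n * |τ - t₀| ^ n / n.factorial) :=
            mul_le_mul (hM τ hτ') (ih τ hτ') (norm_nonneg _) hM0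
    have hg_int : |∫ τ in t₀..σ, g τ| = M ^ (n+1) * |σ - t₀| ^ (n+1) / (n+1).factorial := by
      have h3 : (∫ τ in t₀..σ, g τ)
          = (M * M ^ n / n.factorial) * ∫ τ in t₀..σ, |τ - t₀| ^ n := by
        rw [← intervalIntegral.integral_const_mul]
        apply intervalIntegral.integral_congr
        intro τ _
        simp only [hg]; ring
      have hfac : (0:ℝ) < n.factorial := by exact_mod_cast Nat.factorial_pos n
      rw [h3, abs_mul, abs_integral_abs_pow, abs_of_nonneg (by positivity),
        Nat.factorial_succ]
      push_cast
      field_simp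
      ring
    show ‖(∫ τ in t₀..σ, A τ * pbIter A t₀ n τ)‖ ≤ _
    rw [← hg_int]
    exact key

lemma summablePb (hd : 1 ≤ d) (ht₀ : t₀ ∈ Icc c e) (hA : ContinuousOn A (Icc c e))
    {M : ℝ} (hM : ∀ σ ∈ Icc c e, (d : ℝ) * ‖A σ‖ ≤ M) {σ : ℝ} (hσ : σ ∈ Icc c e) :
    Summable fun n => pbIter A t₀ n σ := by
  refine Summable.of_norm_bounded (g := fun n => (M * |σ - t₀|) ^ n / n.factorial)
    (Real.summable_pow_div_factorial _) fun n => ?_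
  simpa [mul_pow] using normBound hd ht₀ hA hM n σ hσ

lemma swapIntegral (hd : 1 ≤ d) (ht₀ : t₀ ∈ Icc c e) (hA : ContinuousOn A (Icc c e))
    {M : ℝ} (hM : ∀ σ ∈ Icc c e, (d : ℝ) * ‖A σ‖ ≤ M) {s : Set ℝ} (hs : s ⊆ Icc c e)
    (hms : MeasurableSet s) :
    ∫ τ in s, A τ * (∑' n, pbIter A t₀ n τ) = ∑' n, ∫ τ in s, A τ * pbIter A t₀ n τ := by
  have hM0 : 0 ≤ M := le_trans (by positivity) (hM t₀ ht₀)
  have hcont : ∀ n, ContinuousOn (fun τ => A τ * pbIter A t₀ n τ) (Icc c e) := fun n =>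
    hA.mul (contOn ht₀ hA n)
  have hmeas : ∀ n, AEStronglyMeasurable (fun τ => A τ * pbIter A t₀ n τ)
      (volume.restrict s) := fun n => ((hcont n).mono hs).aestronglyMeasurable hms
  have hvol : volume s ≠ ⊤ :=
    ne_top_of_le_ne_top measure_Icc_lt_top.ne (measure_mono hs)
  have hR : ∀ σ ∈ Icc c e, |σ - t₀| ≤ e - c := fun σ hσ =>
    abs_sub_le_iff.mpr ⟨by linarith [hσ.2, ht₀.1], by linarith [hσ.1, ht₀.2]⟩
  have hR0 : (0:ℝ) ≤ e - c := by linarith [ht₀.1, ht₀.2]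
  set B : ℕ → ℝ := fun n => M * ((M * (e - c)) ^ n / n.factorial) with hB
  have hB0 : ∀ n, 0 ≤ B n := fun n => by positivity
  have hBsum : Summable B := (Real.summable_pow_div_factorial (M * (e - c))).mul_left M
  have key : ∑' n, ∫⁻ τ in s, ‖A τ * pbIter A t₀ n τ‖₊ ∂volume ≠ ⊤ := by
    have hle : ∀ n, ∫⁻ τ in s, ‖A τ * pbIter A t₀ n τ‖₊ ∂volume
        ≤ ENNReal.ofReal (B n) * volume s := by
      intro n
      rw [← MeasureTheory.setLIntegral_const s (ENNReal.ofReal (B n))]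
      refine MeasureTheory.setLIntegral_mono measurable_const fun τ hτ => ?_
      have hτ' : τ ∈ Icc c e := hs hτ
      have hb : ‖A τ * pbIter A t₀ n τ‖ ≤ B n := by
        calc ‖A τ * pbIter A t₀ n τ‖ ≤ d * ‖A τ‖ * ‖pbIter A t₀ n τ‖ := norm_mul_le' _ _
          _ ≤ M * (M ^ n * |τ - t₀| ^ n / n.factorial) :=
              mul_le_mul (hM τ hτ') (normBound hd ht₀ hA hM n τ hτ') (norm_nonneg _) hM0
          _ ≤ B n := by
              have h1 : M ^ n * |τ - t₀| ^ n ≤ (M * (e - c)) ^ n := by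
                rw [← mul_pow]
                exact pow_le_pow_left₀ (by positivity)
                  (mul_le_mul_of_nonneg_left (hR τ hτ') hM0) n
              have hfac : (0:ℝ) < n.factorial := by exact_mod_cast Nat.factorial_pos n
              exact mul_le_mul_of_nonneg_left ((div_le_div_iff_of_pos_right hfac).mpr h1) hM0
      calc (‖A τ * pbIter A t₀ n τ‖₊ : ℝ≥0∞)
          = ENNReal.ofReal ‖A τ * pbIter A t₀ n τ‖ := (ofReal_norm _).symm
        _ ≤ ENNReal.ofReal (B n) := ENNReal.ofReal_le_ofReal hb
    have hcalc : ∑' n, ∫⁻ τ in s, ‖A τ * pbIter A t₀ n τ‖₊ ∂volume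
        ≤ ENNReal.ofReal (∑' n, B n) * volume s := calc
      ∑' n, ∫⁻ τ in s, ‖A τ * pbIter A t₀ n τ‖₊ ∂volume
        ≤ ∑' n, ENNReal.ofReal (B n) * volume s := ENNReal.tsum_le_tsum hle
      _ = (∑' n, ENNReal.ofReal (B n)) * volume s := ENNReal.tsum_mul_right
      _ = ENNReal.ofReal (∑' n, B n) * volume s := by
          rw [ENNReal.ofReal_tsum_of_nonneg hB0 hBsum]
    exact ne_top_of_le_ne_top (ENNReal.mul_ne_top ENNReal.ofReal_ne_top hvol) hcalc
  refine Eq.trans ?_ (MeasureTheory.integral_tsum hmeas key)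
  refine MeasureTheory.setIntegral_congr_fun hms fun τ hτ => ?_
  exact ((summablePb hd ht₀ hA hM (hs hτ)).tsum_mul_left (A τ)).symm

lemma inteq (hd : 1 ≤ d) (ht₀ : t₀ ∈ Icc c e) (hA : ContinuousOn A (Icc c e))
    {M : ℝ} (hM : ∀ σ ∈ Icc c e, (d : ℝ) * ‖A σ‖ ≤ M) {u : ℝ} (hu : u ∈ Icc c e) :
    (∑' n, pbIter A t₀ n u) = 1 + ∫ τ in t₀..u, A τ * ∑' n, pbIter A t₀ n τ := by
  rw [Summable.tsum_eq_zero_add (summablePb hd ht₀ hA hM hu)]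
  congr 1
  have hrw : ∀ n, pbIter A t₀ (n + 1) u = ∫ τ in t₀..u, A τ * pbIter A t₀ n τ := fun n => rfl
  rcases le_total t₀ u with h | h
  · have hsub : Ioc t₀ u ⊆ Icc c e :=
      Ioc_subset_Icc_self.trans (Icc_subset_Icc ht₀.1 hu.2)
    simp_rw [hrw, intervalIntegral.integral_of_le h]
    exact (swapIntegral hd ht₀ hA hM hsub measurableSet_Ioc).symm
  · have hsub : Ioc u t₀ ⊆ Icc c e :=
      Ioc_subset_Icc_self.trans (Icc_subset_Icc hu.1 ht₀.2)
    simp_rw [hrw, intervalIntegral.integral_of_ge h, tsum_neg]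
    rw [swapIntegral hd ht₀ hA hM hsub measurableSet_Ioc]

lemma contPhi (hd : 1 ≤ d) (ht₀ : t₀ ∈ Icc c e) (hA : ContinuousOn A (Icc c e))
    {M : ℝ} (hM : ∀ σ ∈ Icc c e, (d : ℝ) * ‖A σ‖ ≤ M) :
    ContinuousOn (fun σ => ∑' n, pbIter A t₀ n σ) (Icc c e) := by
  have hM0 : 0 ≤ M := le_trans (by positivity) (hM t₀ ht₀)
  have hR : ∀ σ ∈ Icc c e, |σ - t₀| ≤ e - c := fun σ hσ =>
    abs_sub_le_iff.mpr ⟨by linarith [hσ.2, ht₀.1], by linarith [hσ.1, ht₀.2]⟩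
  refine continuousOn_tsum (fun n => contOn ht₀ hA n)
    (Real.summable_pow_div_factorial (M * (e - c))) fun n σ hσ => ?_
  have h1 := normBound hd ht₀ hA hM n σ hσ
  have hfac : (0:ℝ) < n.factorial := by exact_mod_cast Nat.factorial_pos n
  refine h1.trans ?_
  rw [← mul_pow]
  exact (div_le_div_iff_of_pos_right hfac).mpr
    (pow_le_pow_left₀ (by positivity) (mul_le_mul_of_nonneg_left (hR σ hσ) hM0) n)

lemma derivIcc (hd : 1 ≤ d) (ht₀ : t₀ ∈ Icc c e) (hA : ContinuousOn A (Icc c e))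
    {M : ℝ} (hM : ∀ σ ∈ Icc c e, (d : ℝ) * ‖A σ‖ ≤ M) {t : ℝ} (ht : t ∈ Icc c e) :
    HasDerivWithinAt (fun s => ∑' n, pbIter A t₀ n s)
      (A t * ∑' n, pbIter A t₀ n t) (Icc c e) t := by
  have hg : ContinuousOn (fun τ => A τ * ∑' n, pbIter A t₀ n τ) (Icc c e) :=
    hA.mul (contPhi hd ht₀ hA hM)
  haveI : Fact (t ∈ Icc c e) := ⟨ht⟩
  have hsub : Set.uIcc t₀ t ⊆ Icc c e := (Set.ordConnected_Icc).uIcc_subset ht₀ ht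
  have hint : IntervalIntegrable (fun τ => A τ * ∑' n, pbIter A t₀ n τ) volume t₀ t :=
    (hg.mono hsub).intervalIntegrable
  have hd1 : HasDerivWithinAt (fun u => ∫ τ in t₀..u, A τ * ∑' n, pbIter A t₀ n τ)
      (A t * ∑' n, pbIter A t₀ n t) (Icc c e) t :=
    intervalIntegral.integral_hasDerivWithinAt_right hint
      (hg.stronglyMeasurableAtFilter_nhdsWithin measurableSet_Icc t)
      (hg t ht)
  have hd2 := hd1.const_add (1 : Matrix (Fin d) (Fin d) ℝ)
  exact hd2.congr (fun u hu => inteq hd ht₀ hA hM hu) (inteq hd ht₀ hA hM ht)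

lemma nbhd {I : Set ℝ} {t : ℝ} (ht : t ∈ I) :
    ∃ a b, a ∈ I ∧ b ∈ I ∧ a ≤ t ∧ t ≤ b ∧ Icc a b ∈ 𝓝[I] t := by
  by_cases hl : ∃ x ∈ I, x < t
  · obtain ⟨x, hxI, hx⟩ := hl
    by_cases hr : ∃ y ∈ I, t < y
    · obtain ⟨y, hyI, hy⟩ := hr
      exact ⟨x, y, hxI, hyI, hx.le, hy.le,
        mem_nhdsWithin.mpr ⟨Ioo x y, isOpen_Ioo, ⟨hx, hy⟩,
          fun z hz => ⟨hz.1.1.le, hz.1.2.le⟩⟩⟩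
    · push_neg at hr
      exact ⟨x, t, hxI, ht, hx.le, le_refl t,
        mem_nhdsWithin.mpr ⟨Ioo x (t+1), isOpen_Ioo, ⟨hx, lt_add_one t⟩,
          fun z hz => ⟨hz.1.1.le, hr z hz.2⟩⟩⟩
  · push_neg at hl
    by_cases hr : ∃ y ∈ I, t < y
    · obtain ⟨y, hyI, hy⟩ := hr
      exact ⟨t, y, ht, hyI, le_refl t, hy.le,
        mem_nhdsWithin.mpr ⟨Ioo (t-1) y, isOpen_Ioo, ⟨by linarith, hy⟩,
          fun z hz => ⟨hl z hz.2, hz.1.2.le⟩⟩⟩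
    · push_neg at hr
      exact ⟨t, t, ht, ht, le_refl t, le_refl t,
        mem_nhdsWithin.mpr ⟨Ioo (t-1) (t+1), isOpen_Ioo, ⟨by linarith, by linarith⟩,
          fun z hz => ⟨hl z hz.2, hr z hz.2⟩⟩⟩

end PBaux

open PBaux in
theorem stmt9 {d : ℕ} (hd : 1 ≤ d) (A : ℝ → Matrix (Fin d) (Fin d) ℝ)
    (I : Set ℝ) (hI : I.OrdConnected) (t₀ : ℝ) (ht₀ : t₀ ∈ I)
    (hA : ContinuousOn A I) :
    (∀ t ∈ I, HasDerivWithinAt (fun s => ∑' n : ℕ, pbIter A t₀ n s)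
        (A t * ∑' n : ℕ, pbIter A t₀ n t) I t) ∧
    ∑' n : ℕ, pbIter A t₀ n t₀ = 1 := by
  constructor
  · intro t ht
    obtain ⟨a, b, haI, hbI, hat, htb, hnb⟩ := nbhd ht
    set c := min a t₀ with hc
    set e := max b t₀ with he
    have hcI : c ∈ I := by
      rcases le_total a t₀ with h | h
      · rwa [hc, min_eq_left h]
      · rwa [hc, min_eq_right h]
    have heI : e ∈ I := by
      rcases le_total b t₀ with h | h
      · rwa [he, max_eq_right h]
      · rwa [he, max_eq_left h]
    have hsub : Set.Icc c e ⊆ I := hI.out hcI heI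
    have ht₀' : t₀ ∈ Set.Icc c e := ⟨min_le_right _ _, le_max_right _ _⟩
    have ht' : t ∈ Set.Icc c e := ⟨(min_le_left a t₀).trans hat, htb.trans (le_max_left b t₀)⟩
    have hA' : ContinuousOn A (Set.Icc c e) := hA.mono hsub
    obtain ⟨C, hC⟩ := (isCompact_Icc : IsCompact (Set.Icc c e)).exists_bound_of_continuousOn hA'
    have hM : ∀ σ ∈ Set.Icc c e, (d:ℝ) * ‖A σ‖ ≤ d * C := fun σ hσ =>
      mul_le_mul_of_nonneg_left (hC σ hσ) (Nat.cast_nonneg d)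
    have hKn : Set.Icc c e ∈ nhdsWithin t I :=
      Filter.mem_of_superset hnb (Set.Icc_subset_Icc (min_le_left _ _) (le_max_left _ _))
    exact (derivIcc hd ht₀' hA' hM ht').mono_of_mem_nhdsWithin hKn
  · rw [tsum_eq_single 0 ?_]
    · rfl
    · intro n hn
      obtain ⟨m, rfl⟩ := Nat.exists_eq_succ_of_ne_zero hn
      show (∫ τ in t₀..t₀, A τ * pbIter A t₀ m τ) = 0
      exact intervalIntegral.integral_same
end

section
/- Let A be a continuous matrix-valued function on an interval I containing t₀, and let Φ_A(t; t₀) denote the sum of the Peano–Baker series. Then its determinant satisfies Liouville's formula: det(Φ_A(t; t₀)) = exp(∫_{t₀}^t tr(A(τ)) dτ) for all t ∈ I. In particular det(Φ_A(t; t₀)) ≠ 0, so Φ_A(t; t₀) is invertible for every t ∈ I. -/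
attribute [local instance] Matrix.normedAddCommGroup Matrix.normedSpace

namespace PBAux

open MeasureTheory intervalIntegral Set

variable {d : ℕ}

noncomputable local instance : CompleteSpace (Matrix (Fin d) (Fin d) ℝ) :=
  FiniteDimensional.complete ℝ _

lemma norm_mul_le' (M N : Matrix (Fin d) (Fin d) ℝ) : ‖M * N‖ ≤ d * ‖M‖ * ‖N‖ := by
  rw [Matrix.norm_le_iff (by positivity)]
  intro i j
  calc ‖(M * N) i j‖ = |∑ k, M i k * N k j| := by rw [Matrix.mul_apply]; rfl
    _ ≤ ∑ k, |M i k * N k j| := Finset.abs_sum_le_sum_abs _ _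
    _ ≤ ∑ _k : Fin d, ‖M‖ * ‖N‖ := Finset.sum_le_sum fun k _ => by
        rw [abs_mul]
        exact mul_le_mul (M.norm_entry_le_entrywise_sup_norm)
          (N.norm_entry_le_entrywise_sup_norm) (abs_nonneg _) (norm_nonneg _)
    _ = d * ‖M‖ * ‖N‖ := by
        rw [Finset.sum_const, Finset.card_univ, Fintype.card_fin, nsmul_eq_mul, mul_assoc]

lemma norm_one_le : ‖(1 : Matrix (Fin d) (Fin d) ℝ)‖ ≤ 1 := by
  rw [Matrix.norm_le_iff zero_le_one]
  intro i j
  by_cases h : i = j <;> simp [Matrix.one_apply, h]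

/-- The determinant as a continuous multilinear map in the rows. -/
noncomputable def detCM (d : ℕ) :
    ContinuousMultilinearMap ℝ (fun _ : Fin d => (Fin d → ℝ)) ℝ :=
  MultilinearMap.mkContinuous
    (Matrix.detRowAlternating : (Fin d → ℝ) [⋀^Fin d]→ₗ[ℝ] ℝ).toMultilinearMap
    (Nat.factorial d) <| by
      intro m
      have hm : (Matrix.detRowAlternating :
          (Fin d → ℝ) [⋀^Fin d]→ₗ[ℝ] ℝ).toMultilinearMap m = Matrix.det (Matrix.of fun i j => m i j) := rfl
      rw [hm, Matrix.det_apply']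
      calc |∑ σ : Equiv.Perm (Fin d), (Equiv.Perm.sign σ : ℤ) * ∏ i, (Matrix.of fun i j => m i j) (σ i) i|
          ≤ ∑ σ : Equiv.Perm (Fin d), |(Equiv.Perm.sign σ : ℤ) * ∏ i, (Matrix.of fun i j => m i j) (σ i) i| :=
            Finset.abs_sum_le_sum_abs _ _
        _ ≤ ∑ _σ : Equiv.Perm (Fin d), ∏ i, ‖m i‖ := by
            refine Finset.sum_le_sum fun σ _ => ?_
            have h1 : |((Equiv.Perm.sign σ : ℤ) : ℝ)| = 1 := by
              rcases Int.units_eq_one_or (Equiv.Perm.sign σ) with h | h <;> simp [h]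
            rw [abs_mul, h1, one_mul, Finset.abs_prod]
            calc ∏ i, |(Matrix.of fun i j => m i j) (σ i) i|
                ≤ ∏ i, ‖m (σ i)‖ := Finset.prod_le_prod (fun _ _ => abs_nonneg _)
                    (fun i _ => norm_le_pi_norm (m (σ i)) i)
              _ = ∏ i, ‖m i‖ := Equiv.prod_comp σ fun i => ‖m i‖
        _ = (Nat.factorial d) * ∏ i, ‖m i‖ := by
            rw [Finset.sum_const, Finset.card_univ, Fintype.card_perm, Fintype.card_fin,
              nsmul_eq_mul]

lemma detCM_apply (M : Matrix (Fin d) (Fin d) ℝ) : detCM d M = M.det := rfl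

lemma sum_det_updateRow (N M : Matrix (Fin d) (Fin d) ℝ) :
    ∑ i, (M.updateRow i ((N * M) i)).det = N.trace * M.det := by
  have h : ∀ i : Fin d, (N * M) i = ∑ k, N i k • M k := by
    intro i
    funext j
    simp [Matrix.mul_apply, Finset.sum_apply]
  calc ∑ i, (M.updateRow i ((N * M) i)).det
      = ∑ i, N i i * M.det := Finset.sum_congr rfl fun i _ => by
        rw [h i, Matrix.det_updateRow_sum, smul_eq_mul]
    _ = N.trace * M.det := by rw [Matrix.trace, ← Finset.sum_mul]; rfl

lemma hasDerivAt_det {Φ : ℝ → Matrix (Fin d) (Fin d) ℝ} {Φ' : Matrix (Fin d) (Fin d) ℝ} {t : ℝ}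
    (h : HasDerivAt Φ Φ' t) :
    HasDerivAt (fun s => (Φ s).det) (∑ i, ((Φ t).updateRow i (Φ' i)).det) t := by
  have hD : HasFDerivAt (fun M : Matrix (Fin d) (Fin d) ℝ => detCM d M)
      ((detCM d).linearDeriv (Φ t)) (Φ t) := (detCM d).hasFDerivAt (Φ t)
  have hcomp := hD.comp_hasDerivAt t h
  rw [Function.comp_def] at hcomp
  have h1 : (fun s => detCM d (Φ s)) = fun s => (Φ s).det := by
    funext s; exact detCM_apply (Φ s)
  have h2 : (detCM d).linearDeriv (Φ t) Φ' = ∑ i, ((Φ t).updateRow i (Φ' i)).det := by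
    erw [ContinuousMultilinearMap.linearDeriv_apply]
    refine Finset.sum_congr rfl fun i _ => ?_
    rfl
  rw [h1] at hcomp
  convert hcomp using 1
  all_goals first | rfl | exact h2.symm

lemma abs_integral_abs_pow (n : ℕ) (t₀ t : ℝ) :
    |∫ τ in t₀..t, |τ - t₀| ^ n| = |t - t₀| ^ (n + 1) / (n + 1) := by
  rcases le_total t₀ t with h | h
  · have hcong : EqOn (fun τ => |τ - t₀| ^ n) (fun τ => (τ - t₀) ^ n) (uIcc t₀ t) := by
      intro τ hτ
      rw [uIcc_of_le h] at hτ
      simp only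
      rw [abs_of_nonneg (sub_nonneg.2 hτ.1)]
    rw [integral_congr hcong, integral_comp_sub_right (fun x => x ^ n) t₀, sub_self,
      integral_pow, abs_of_nonneg (sub_nonneg.2 h)]
    simp only [zero_pow (Nat.succ_ne_zero n), sub_zero]
    exact abs_of_nonneg (div_nonneg (pow_nonneg (sub_nonneg.2 h) _) (by positivity))
  · have hcong : EqOn (fun τ => |τ - t₀| ^ n) (fun τ => (t₀ - τ) ^ n) (uIcc t₀ t) := by
      intro τ hτ
      rw [uIcc_of_ge h] at hτ
      simp only
      rw [abs_sub_comm, abs_of_nonneg (sub_nonneg.2 hτ.2)]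
    rw [integral_congr hcong, integral_comp_sub_left (fun x => x ^ n) t₀, sub_self,
      integral_pow, abs_sub_comm t t₀, abs_of_nonneg (sub_nonneg.2 h)]
    have hx : (0:ℝ) ≤ (t₀ - t) ^ (n + 1) := pow_nonneg (sub_nonneg.2 h) _
    rw [zero_pow (Nat.succ_ne_zero n), zero_sub, abs_div, abs_neg, abs_of_nonneg hx,
      abs_of_nonneg (by positivity : (0:ℝ) ≤ ((n:ℝ)+1))]

variable {B : ℝ → Matrix (Fin d) (Fin d) ℝ} {t₀ C : ℝ}

lemma pb_cont (hB : Continuous B) : ∀ n, Continuous (pbIter B t₀ n) := by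
  intro n
  induction n with
  | zero => exact continuous_const
  | succ n ih =>
    have hg : Continuous fun τ => B τ * pbIter B t₀ n τ := hB.matrix_mul ih
    exact intervalIntegral.continuous_primitive (fun a b => hg.intervalIntegrable a b) t₀

lemma pb_norm_le (hB : Continuous B) (hC0 : 0 ≤ C) (hC : ∀ s, ‖B s‖ ≤ C) :
    ∀ n t, ‖pbIter B t₀ n t‖ ≤ (d * C) ^ n * |t - t₀| ^ n / n.factorial := by
  intro n
  induction n with
  | zero => intro t; simpa [pbIter] using norm_one_le
  | succ n ih =>
    intro t
    have hdC : (0:ℝ) ≤ d * C := by positivity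
    have hbound : ∀ τ, ‖B τ * pbIter B t₀ n τ‖ ≤
        (d * C) ^ (n + 1) / n.factorial * |τ - t₀| ^ n := by
      intro τ
      calc ‖B τ * pbIter B t₀ n τ‖ ≤ d * ‖B τ‖ * ‖pbIter B t₀ n τ‖ := norm_mul_le' _ _
        _ ≤ d * C * ((d * C) ^ n * |τ - t₀| ^ n / n.factorial) := by
            refine mul_le_mul ?_ (ih τ) (norm_nonneg _) hdC
            exact mul_le_mul_of_nonneg_left (hC τ) (by positivity)
        _ = (d * C) ^ (n + 1) / n.factorial * |τ - t₀| ^ n := by ring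
    have h1 : ‖pbIter B t₀ (n+1) t‖ ≤
        |∫ τ in t₀..t, (d * C) ^ (n + 1) / n.factorial * |τ - t₀| ^ n| := by
      show ‖∫ τ in t₀..t, B τ * pbIter B t₀ n τ‖ ≤ _
      apply intervalIntegral.norm_integral_le_abs_of_norm_le
      · exact Filter.Eventually.of_forall fun τ => hbound τ
      · apply ContinuousOn.intervalIntegrable
        apply Continuous.continuousOn
        continuity
    calc ‖pbIter B t₀ (n+1) t‖
        ≤ |∫ τ in t₀..t, (d * C) ^ (n + 1) / n.factorial * |τ - t₀| ^ n| := h1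
      _ = (d * C) ^ (n + 1) / n.factorial * |∫ τ in t₀..t, |τ - t₀| ^ n| := by
          rw [intervalIntegral.integral_const_mul, abs_mul, abs_of_nonneg (by positivity)]
      _ = (d * C) ^ (n + 1) * |t - t₀| ^ (n + 1) / (n + 1).factorial := by
          rw [abs_integral_abs_pow]
          have hfac : (((n+1).factorial : ℕ) : ℝ) = ((n:ℝ) + 1) * n.factorial := by
            rw [Nat.factorial_succ]; push_cast; ring
          rw [hfac]
          have h0 : ((n.factorial : ℕ) : ℝ) ≠ 0 := Nat.cast_ne_zero.2 n.factorial_ne_zero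
          rw [div_mul_div_comm, mul_comm ((n.factorial : ℕ) : ℝ) ((n:ℝ) + 1)]

lemma pb_summable (hB : Continuous B) (hC0 : 0 ≤ C) (hC : ∀ s, ‖B s‖ ≤ C) (t : ℝ) :
    Summable fun n => pbIter B t₀ n t := by
  apply Summable.of_norm
  refine Summable.of_nonneg_of_le (fun n => norm_nonneg _) (fun n => ?_)
    (Real.summable_pow_div_factorial (d * C * |t - t₀|))
  calc ‖pbIter B t₀ n t‖ ≤ (d * C) ^ n * |t - t₀| ^ n / n.factorial :=
      pb_norm_le hB hC0 hC n t
    _ = (d * C * |t - t₀|) ^ n / n.factorial := by rw [mul_pow (↑d * C) (|t - t₀|)]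

lemma pb_tsum_continuous (hB : Continuous B) (hC0 : 0 ≤ C) (hC : ∀ s, ‖B s‖ ≤ C) :
    Continuous fun t => ∑' n, pbIter B t₀ n t := by
  rw [continuous_iff_continuousAt]
  intro x
  have hmem : Icc (x - 1) (x + 1) ∈ nhds x := Icc_mem_nhds (by linarith) (by linarith)
  refine ContinuousOn.continuousAt ?_ hmem
  set R : ℝ := |x - t₀| + 1 with hR
  have hR0 : 0 ≤ R := by positivity
  refine continuousOn_tsum (fun n => (pb_cont hB n).continuousOn)
    (Real.summable_pow_div_factorial (d * C * R)) ?_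
  intro n t ht
  have htR : |t - t₀| ≤ R := by
    have : |t - t₀| ≤ |t - x| + |x - t₀| := abs_sub_le t x t₀
    have h2 : |t - x| ≤ 1 := by
      rw [abs_le]; constructor <;> [linarith [ht.1]; linarith [ht.2]]
    linarith
  calc ‖pbIter B t₀ n t‖ ≤ (d * C) ^ n * |t - t₀| ^ n / n.factorial := pb_norm_le hB hC0 hC n t
    _ ≤ (d * C) ^ n * R ^ n / n.factorial := by
        have h3 : |t - t₀| ^ n ≤ R ^ n := pow_le_pow_left₀ (abs_nonneg _) htR n
        have h4 : (0:ℝ) ≤ n.factorial := by positivity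
        exact div_le_div_of_nonneg_right (mul_le_mul_of_nonneg_left h3 (by positivity)) h4
    _ = (d * C * R) ^ n / n.factorial := by rw [mul_pow (↑d * C) R]

open scoped Interval in
lemma pb_integral_eq (hB : Continuous B) (hC0 : 0 ≤ C) (hC : ∀ s, ‖B s‖ ≤ C) (t : ℝ) :
    (∑' n, pbIter B t₀ n t) = 1 + ∫ τ in t₀..t, B τ * (∑' n, pbIter B t₀ n τ) := by
  have hsum : ∀ s, Summable fun n => pbIter B t₀ n s := pb_summable hB hC0 hC
  rw [(hsum t).tsum_eq_zero_add]
  congr 1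
  have hf : ∀ n, Continuous fun τ => B τ * pbIter B t₀ n τ :=
    fun n => hB.matrix_mul (pb_cont hB n)
  -- the uniform bound on the interval
  set R : ℝ := |t - t₀| with hRdef
  set v : ℕ → ℝ := fun n => d * C * ((d * C * R) ^ n / n.factorial) with hvdef
  have hvsum : Summable v := (Real.summable_pow_div_factorial (d * C * R)).mul_left _
  have hbound : ∀ n, ∀ τ ∈ uIcc t₀ t, ‖B τ * pbIter B t₀ n τ‖ ≤ v n := by
    intro n τ hτ
    have hτR : |τ - t₀| ≤ R := by
      rw [hRdef]
      rcases le_total t₀ t with h | h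
      · rw [uIcc_of_le h] at hτ
        rw [abs_of_nonneg (sub_nonneg.2 hτ.1), abs_of_nonneg (sub_nonneg.2 h)]
        linarith [hτ.2]
      · rw [uIcc_of_ge h] at hτ
        rw [abs_of_nonpos (sub_nonpos.2 hτ.2), abs_of_nonpos (sub_nonpos.2 h)]
        linarith [hτ.1]
    calc ‖B τ * pbIter B t₀ n τ‖ ≤ d * ‖B τ‖ * ‖pbIter B t₀ n τ‖ := norm_mul_le' _ _
      _ ≤ d * C * ((d * C) ^ n * |τ - t₀| ^ n / n.factorial) := by
          refine mul_le_mul ?_ (pb_norm_le hB hC0 hC n τ) (norm_nonneg _) (by positivity)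
          exact mul_le_mul_of_nonneg_left (hC τ) (by positivity)
      _ ≤ v n := by
          rw [hvdef]
          simp only
          refine mul_le_mul_of_nonneg_left ?_ (by positivity)
          rw [mul_pow (↑d * C) R]
          have h3 : |τ - t₀| ^ n ≤ R ^ n := pow_le_pow_left₀ (abs_nonneg _) hτR n
          have h4 : (0:ℝ) ≤ n.factorial := by positivity
          exact div_le_div_of_nonneg_right (mul_le_mul_of_nonneg_left h3 (by positivity)) h4
  -- swap the sum and the integral
  have hInt : ∀ n : ℕ, @IntegrableOn ℝ (Matrix (Fin d) (Fin d) ℝ) _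
      PseudoMetricSpace.toUniformSpace.toTopologicalSpace _
      (fun τ => B τ * pbIter B t₀ n τ) (Ι t₀ t) volume :=
    fun n => ((hf n).continuousOn.integrableOn_compact isCompact_uIcc).mono_set
      uIoc_subset_uIcc
  have hnorm_int : Summable fun n => ∫ τ in Ι t₀ t, ‖B τ * pbIter B t₀ n τ‖ := by
    refine Summable.of_nonneg_of_le
      (fun n => MeasureTheory.integral_nonneg fun τ => norm_nonneg _)
      (fun n => ?_) (hvsum.mul_right ((volume (Ι t₀ t)).toReal))
    have h0 : 0 ≤ ∫ τ in Ι t₀ t, ‖B τ * pbIter B t₀ n τ‖ :=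
      MeasureTheory.integral_nonneg fun τ => norm_nonneg _
    rw [← abs_of_nonneg h0, ← Real.norm_eq_abs]
    refine norm_setIntegral_le_of_norm_le_const ?_ ?_
    · exact lt_of_le_of_lt (measure_mono uIoc_subset_uIcc) isCompact_uIcc.measure_lt_top
    · intro τ hτ
      rw [Real.norm_eq_abs, abs_of_nonneg (norm_nonneg _)]
      exact hbound n τ (uIoc_subset_uIcc hτ)
  have hswap := MeasureTheory.integral_tsum_of_summable_integral_norm hInt hnorm_int
  have hintsum : Summable fun n => ∫ τ in Ι t₀ t, B τ * pbIter B t₀ n τ := by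
    apply Summable.of_norm
    exact Summable.of_nonneg_of_le (fun n => norm_nonneg _)
      (fun n => MeasureTheory.norm_integral_le_integral_norm _) hnorm_int
  have hmul : ∀ τ, (∑' n, B τ * pbIter B t₀ n τ) = B τ * ∑' n, pbIter B t₀ n τ := by
    intro τ
    let L : Matrix (Fin d) (Fin d) ℝ →L[ℝ] Matrix (Fin d) (Fin d) ℝ :=
      LinearMap.toContinuousLinearMap (LinearMap.mulLeft ℝ (B τ))
    exact (L.map_tsum (hsum τ)).symm
  calc (∑' n, pbIter B t₀ (n + 1) t)
      = ∑' n, ∫ τ in t₀..t, B τ * pbIter B t₀ n τ := by rfl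
    _ = ∫ τ in t₀..t, B τ * ∑' n, pbIter B t₀ n τ := by
        rcases le_total t₀ t with h | h
        · simp only [intervalIntegral.intervalIntegral_eq_integral_uIoc, if_pos h, one_smul]
          erw [hswap]
          exact setIntegral_congr_fun measurableSet_uIoc fun τ _ => hmul τ
        · by_cases heq : t₀ = t
          · subst heq
            simp
          · have hlt : ¬ (t₀ ≤ t) := fun hc => heq (le_antisymm hc h)
            simp only [intervalIntegral.intervalIntegral_eq_integral_uIoc, if_neg hlt]
            rw [Summable.tsum_const_smul ((-1:ℝ)) ?_]; erw [hswap]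
            · congr 1
              exact setIntegral_congr_fun measurableSet_uIoc fun τ _ => hmul τ
            · exact hintsum

lemma pb_hasDerivAt (hB : Continuous B) (hC0 : 0 ≤ C) (hC : ∀ s, ‖B s‖ ≤ C) (t : ℝ) :
    HasDerivAt (fun s => ∑' n, pbIter B t₀ n s) (B t * ∑' n, pbIter B t₀ n t) t := by
  have hg : Continuous fun τ => B τ * ∑' n, pbIter B t₀ n τ :=
    hB.matrix_mul (pb_tsum_continuous hB hC0 hC)
  have h1 : HasDerivAt (fun s => (1 : Matrix (Fin d) (Fin d) ℝ) +
      ∫ τ in t₀..s, B τ * ∑' n, pbIter B t₀ n τ) (B t * ∑' n, pbIter B t₀ n t) t := by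
    apply HasDerivAt.const_add
    haveI : TopologicalSpace.PseudoMetrizableSpace (Matrix (Fin d) (Fin d) ℝ) :=
      inferInstanceAs (TopologicalSpace.PseudoMetrizableSpace (Fin d → Fin d → ℝ))
    exact intervalIntegral.integral_hasDerivAt_right (hg.intervalIntegrable _ _)
      (hg.stronglyMeasurableAtFilter _ _) hg.continuousAt
  have h2 : (fun s => ∑' n, pbIter B t₀ n s) = fun s =>
      (1 : Matrix (Fin d) (Fin d) ℝ) + ∫ τ in t₀..s, B τ * ∑' n, pbIter B t₀ n τ :=
    funext fun s => pb_integral_eq hB hC0 hC s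
  rw [h2]
  exact h1

lemma pb_det_eq (hB : Continuous B) (hC0 : 0 ≤ C) (hC : ∀ s, ‖B s‖ ≤ C) (t : ℝ) :
    (∑' n, pbIter B t₀ n t).det = Real.exp (∫ τ in t₀..t, (B τ).trace) := by
  set Φ : ℝ → Matrix (Fin d) (Fin d) ℝ := fun s => ∑' n, pbIter B t₀ n s with hΦdef
  set ρ : ℝ → ℝ := fun s => ∫ τ in t₀..s, (B τ).trace with hρdef
  have htr : Continuous fun τ => (B τ).trace := hB.matrix_trace
  have hρ : ∀ s, HasDerivAt ρ ((B s).trace) s := fun s =>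
    intervalIntegral.integral_hasDerivAt_right (htr.intervalIntegrable _ _)
      (htr.stronglyMeasurableAtFilter _ _) htr.continuousAt
  have key : ∀ s, HasDerivAt (fun u => (Φ u).det * Real.exp (-ρ u)) 0 s := by
    intro s
    have hΦ := pb_hasDerivAt (t₀ := t₀) hB hC0 hC s
    have hdet : HasDerivAt (fun u => (Φ u).det) ((B s).trace * (Φ s).det) s := by
      have h := hasDerivAt_det hΦ
      rwa [sum_det_updateRow] at h
    have hexp : HasDerivAt (fun u => Real.exp (-ρ u))
        (Real.exp (-ρ s) * (-(B s).trace)) s := ((hρ s).neg).exp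
    have := hdet.mul hexp
    convert this using 1
    all_goals first | rfl | ring
  have hconst : ∀ s, (Φ s).det * Real.exp (-ρ s) = (Φ t₀).det * Real.exp (-ρ t₀) := by
    intro s
    exact is_const_of_deriv_eq_zero (fun u => (key u).differentiableAt)
      (fun u => (key u).deriv) s t₀
  have hΦ0 : Φ t₀ = 1 := by
    rw [hΦdef]
    simp only
    rw [tsum_eq_single 0 ?_]
    · rfl
    · intro n hn
      cases n with
      | zero => exact absurd rfl hn
      | succ m => show (∫ τ in t₀..t₀, B τ * pbIter B t₀ m τ) = 0
                  simp
  have hρ0 : ρ t₀ = 0 := intervalIntegral.integral_same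
  have h := hconst t
  rw [hΦ0, hρ0, Matrix.det_one, neg_zero, Real.exp_zero, mul_one] at h
  have e1 : Real.exp (-ρ t) * Real.exp (ρ t) = 1 := by rw [← Real.exp_add]; simp
  calc (Φ t).det = (Φ t).det * (Real.exp (-ρ t) * Real.exp (ρ t)) := by rw [e1, mul_one]
    _ = ((Φ t).det * Real.exp (-ρ t)) * Real.exp (ρ t) := by ring
    _ = Real.exp (ρ t) := by rw [h, one_mul]

end PBAux

theorem stmt11 {d : ℕ} (hd : 1 ≤ d) (A : ℝ → Matrix (Fin d) (Fin d) ℝ)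
    (I : Set ℝ) (hI : I.OrdConnected) (t₀ : ℝ) (ht₀ : t₀ ∈ I)
    (hA : ContinuousOn A I) :
    ∀ t ∈ I,
      (∑' n : ℕ, pbIter A t₀ n t).det = Real.exp (∫ τ in t₀..t, (A τ).trace) ∧
      (∑' n : ℕ, pbIter A t₀ n t).det ≠ 0 ∧
      IsUnit (∑' n : ℕ, pbIter A t₀ n t) := by
  intro t₁ ht₁
  classical
  set a := min t₀ t₁ with ha
  set b := max t₀ t₁ with hb
  have hab : a ≤ b := min_le_max
  have huIcc : Set.uIcc t₀ t₁ = Set.Icc a b := rfl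
  have hKI : Set.Icc a b ⊆ I := by rw [← huIcc]; exact hI.uIcc_subset ht₀ ht₁
  set B : ℝ → Matrix (Fin d) (Fin d) ℝ :=
    Set.IccExtend hab ((Set.Icc a b).restrict A) with hBdef
  have hB : Continuous B := ((hA.mono hKI).restrict).Icc_extend'
  have hBA : ∀ s ∈ Set.Icc a b, B s = A s := by
    intro s hs
    rw [hBdef]
    rw [Set.IccExtend_of_mem hab _ hs]
    rfl
  obtain ⟨C₀, hC₀⟩ := isCompact_Icc.exists_bound_of_continuousOn (hA.mono hKI)
  set C := max C₀ 0 with hCdef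
  have hC0 : (0:ℝ) ≤ C := le_max_right _ _
  have hC : ∀ s, ‖B s‖ ≤ C := by
    intro s
    show ‖A ↑(Set.projIcc a b hab s)‖ ≤ C
    exact le_trans (hC₀ _ (Set.projIcc a b hab s).2) (le_max_left _ _)
  have ht₀m : t₀ ∈ Set.Icc a b := by rw [← huIcc]; exact Set.left_mem_uIcc
  have ht₁m : t₁ ∈ Set.Icc a b := by rw [← huIcc]; exact Set.right_mem_uIcc
  have hpb : ∀ n, ∀ s ∈ Set.Icc a b, pbIter A t₀ n s = pbIter B t₀ n s := by
    intro n
    induction n with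
    | zero => intro s _; rfl
    | succ m ih =>
      intro s hs
      show (∫ τ in t₀..s, A τ * pbIter A t₀ m τ) = ∫ τ in t₀..s, B τ * pbIter B t₀ m τ
      apply intervalIntegral.integral_congr
      intro τ hτ
      have hτm : τ ∈ Set.Icc a b := by
        rw [← huIcc]
        exact Set.uIcc_subset_uIcc (by rw [huIcc]; exact ht₀m)
          (by rw [huIcc]; exact hs) hτ
      simp only
      rw [hBA τ hτm, ih τ hτm]
  have htsum : (∑' n, pbIter A t₀ n t₁) = ∑' n, pbIter B t₀ n t₁ :=
    tsum_congr fun n => hpb n t₁ ht₁m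
  have hint : (∫ τ in t₀..t₁, (A τ).trace) = ∫ τ in t₀..t₁, (B τ).trace := by
    apply intervalIntegral.integral_congr
    intro τ hτ
    simp only
    rw [hBA τ (by rw [← huIcc]; exact hτ)]
  have hdet := PBAux.pb_det_eq (t₀ := t₀) hB hC0 hC t₁
  rw [htsum, hint]
  refine ⟨hdet, ?_, ?_⟩
  · rw [hdet]; exact Real.exp_ne_zero _
  · rw [Matrix.isUnit_iff_isUnit_det]
    refine isUnit_iff_ne_zero.2 ?_
    rw [hdet]
    exact Real.exp_ne_zero _
end

section
/- Let A be a continuous matrix-valued function on an interval I, and for s ∈ I let Φ_A(·; s) denote the sum of the Peano–Baker series with base point s. Then for all t, s ∈ I, Φ_A(t; s) is invertible with inverse (Φ_A(t; s))⁻¹ = Φ_A(s; t). -/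
attribute [local instance] Matrix.normedAddCommGroup Matrix.normedSpace

open MeasureTheory Set intervalIntegral
open scoped Interval

instance (d : ℕ) : TopologicalSpace.PseudoMetrizableSpace (Matrix (Fin d) (Fin d) ℝ) :=
  inferInstanceAs (TopologicalSpace.PseudoMetrizableSpace (Fin d → Fin d → ℝ))

namespace PB

variable {d : ℕ}

lemma norm_mul_le_card (X Y : Matrix (Fin d) (Fin d) ℝ) :
    ‖X * Y‖ ≤ d * ‖X‖ * ‖Y‖ := by
  have h0 : (0:ℝ) ≤ d * ‖X‖ * ‖Y‖ := by positivity
  rw [Matrix.norm_le_iff h0]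
  intro i j
  calc ‖(X*Y) i j‖ = |∑ k, X i k * Y k j| := rfl
    _ ≤ ∑ k, |X i k * Y k j| := Finset.abs_sum_le_sum_abs _ _
    _ ≤ ∑ _k : Fin d, ‖X‖ * ‖Y‖ := Finset.sum_le_sum fun k _ => by
          rw [abs_mul]
          exact mul_le_mul (Matrix.norm_entry_le_entrywise_sup_norm X)
            (Matrix.norm_entry_le_entrywise_sup_norm Y) (abs_nonneg _) (norm_nonneg _)
    _ = d * ‖X‖ * ‖Y‖ := by simp [Finset.sum_const, mul_assoc]

lemma norm_one_le : ‖(1 : Matrix (Fin d) (Fin d) ℝ)‖ ≤ 1 := by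
  rw [Matrix.norm_le_iff (by norm_num : (0:ℝ) ≤ 1)]
  intro i j
  rw [Matrix.one_apply]
  split <;> simp

section

variable (A : ℝ → Matrix (Fin d) (Fin d) ℝ) {a b : ℝ} (hab : a ≤ b)
  (hA : ContinuousOn A (Icc a b)) {M : ℝ} (hM : ∀ u ∈ Icc a b, ‖A u‖ ≤ M) (hM0 : 0 ≤ M)

include hM hM0 in
lemma key_bound : ∀ τ ∈ Icc a b, ∀ X : Matrix (Fin d) (Fin d) ℝ,
    ‖A τ * X‖ ≤ (d * M) * ‖X‖ := by
  intro τ hτ X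
  refine (norm_mul_le_card _ _).trans ?_
  have h1 := hM τ hτ
  have h2 := norm_nonneg X
  have h3 := norm_nonneg (A τ)
  have h4 : (0:ℝ) ≤ d := Nat.cast_nonneg d
  exact mul_le_mul_of_nonneg_right (mul_le_mul_of_nonneg_left h1 h4) h2

include hab hA hM hM0 in
lemma pb_cont_bound {b₀ : ℝ} (hb₀ : b₀ ∈ Icc a b) (n : ℕ) :
    ContinuousOn (pbIter A b₀ n) (Icc a b) ∧
      ∀ u ∈ Icc a b, ‖pbIter A b₀ n u‖ ≤ ((d * M) * |u - b₀|) ^ n / n.factorial := by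
  set C : ℝ := d * M with hCdef
  have hC : 0 ≤ C := by positivity
  induction n with
  | zero =>
    refine ⟨continuousOn_const, fun u hu => ?_⟩
    simpa [pbIter] using norm_one_le
  | succ n ih =>
    obtain ⟨ihc, ihb⟩ := ih
    have hsub : ∀ {u : ℝ}, u ∈ Icc a b → uIcc b₀ u ⊆ Icc a b := fun {u} hu =>
      uIcc_subset_Icc hb₀ hu
    have hcont : ContinuousOn (fun τ => A τ * pbIter A b₀ n τ) (Icc a b) :=
      hA.mul ihc
    have hcont' : ContinuousOn (pbIter A b₀ (n+1)) (Icc a b) := by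
      have : ContinuousOn (fun u => ∫ τ in b₀..u, A τ * pbIter A b₀ n τ) (uIcc a b) := by
        apply continuousOn_primitive_interval'
        · exact (hcont.mono (by rw [uIcc_of_le hab])).intervalIntegrable
        · rw [uIcc_of_le hab]; exact hb₀
      show ContinuousOn (fun u => ∫ τ in b₀..u, A τ * pbIter A b₀ n τ) (Icc a b)
      rw [uIcc_of_le hab] at this; exact this
    refine ⟨hcont', fun u hu => ?_⟩
    have hbd : ∀ τ ∈ Icc a b, ‖A τ * pbIter A b₀ n τ‖ ≤ C * (C * |τ - b₀|) ^ n / n.factorial := by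
      intro τ hτ
      have := key_bound A hM hM0 τ hτ (pbIter A b₀ n τ)
      calc ‖A τ * pbIter A b₀ n τ‖ ≤ C * ‖pbIter A b₀ n τ‖ := this
        _ ≤ C * ((C * |τ - b₀|) ^ n / n.factorial) := by
            exact mul_le_mul_of_nonneg_left (ihb τ hτ) hC
        _ = C * (C * |τ - b₀|) ^ n / n.factorial := by ring
    show ‖∫ τ in b₀..u, A τ * pbIter A b₀ n τ‖ ≤ _
    rcases le_total b₀ u with hcase | hcase
    · have hIoc : Ι b₀ u ⊆ Icc a b := by
        rw [uIoc_of_le hcase]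
        exact fun x hx => (hsub hu) (by rw [uIcc_of_le hcase]; exact Ioc_subset_Icc_self hx)
      have hg : IntervalIntegrable (fun τ => C * (C * (τ - b₀)) ^ n / n.factorial) volume b₀ u :=
        (Continuous.continuousOn (by continuity)).intervalIntegrable
      have hle : ‖∫ τ in b₀..u, A τ * pbIter A b₀ n τ‖ ≤
          |∫ τ in b₀..u, C * (C * (τ - b₀)) ^ n / n.factorial| := by
        apply intervalIntegral.norm_integral_le_abs_of_norm_le _ hg
        filter_upwards [ae_restrict_mem measurableSet_uIoc] with τ hτ
        have hτ' : τ ∈ Icc a b := hIoc hτ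
        have h1 : b₀ ≤ τ := by
          rw [uIoc_of_le hcase] at hτ; exact le_of_lt hτ.1
        have := hbd τ hτ'
        rwa [abs_of_nonneg (by linarith)] at this
      have hval : ∫ τ in b₀..u, C * (C * (τ - b₀)) ^ n / n.factorial
          = (C * (u - b₀)) ^ (n+1) / (n+1).factorial := by
        have : ∀ τ : ℝ, C * (C * (τ - b₀)) ^ n / n.factorial
            = (C ^ (n+1) / n.factorial) * (τ - b₀) ^ n := by
          intro τ; rw [mul_pow]; ring
        simp_rw [this]
        rw [intervalIntegral.integral_const_mul]
        have := intervalIntegral.integral_comp_sub_right (fun x => x ^ n) b₀ (a := b₀) (b := u)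
        have hfac : (((n+1).factorial : ℕ) : ℝ) = ((n:ℝ)+1) * n.factorial := by
          rw [Nat.factorial_succ]; push_cast; ring
        rw [this, integral_pow, sub_self, zero_pow (Nat.succ_ne_zero n), sub_zero, mul_pow C (u - b₀) (n+1), hfac]
        have h1 : ((n.factorial : ℕ) : ℝ) ≠ 0 := Nat.cast_ne_zero.2 n.factorial_ne_zero
        have h2 : ((n:ℝ)+1) ≠ 0 := by positivity
        field_simp
        try ring
        try exact Or.inl trivial
      rw [hval] at hle
      refine hle.trans ?_
      have hnn : (0:ℝ) ≤ (C * (u - b₀)) ^ (n+1) / (n+1).factorial :=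
        div_nonneg (pow_nonneg (mul_nonneg hC (by linarith)) _) (by positivity)
      rw [abs_of_nonneg hnn, abs_of_nonneg (by linarith : (0:ℝ) ≤ u - b₀)]
    · have hIoc : Ι b₀ u ⊆ Icc a b := by
        rw [uIoc_of_ge hcase]
        exact fun x hx => (hsub hu) (by rw [uIcc_of_ge hcase]; exact Ioc_subset_Icc_self hx)
      have hg : IntervalIntegrable (fun τ => C * (C * (b₀ - τ)) ^ n / n.factorial) volume b₀ u :=
        (Continuous.continuousOn (by continuity)).intervalIntegrable
      have hle : ‖∫ τ in b₀..u, A τ * pbIter A b₀ n τ‖ ≤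
          |∫ τ in b₀..u, C * (C * (b₀ - τ)) ^ n / n.factorial| := by
        apply intervalIntegral.norm_integral_le_abs_of_norm_le _ hg
        filter_upwards [ae_restrict_mem measurableSet_uIoc] with τ hτ
        have hτ' : τ ∈ Icc a b := hIoc hτ
        have h1 : τ ≤ b₀ := by
          rw [uIoc_of_ge hcase] at hτ; exact hτ.2
        have := hbd τ hτ'
        rwa [abs_of_nonpos (by linarith), neg_sub] at this
      have hval : ∫ τ in b₀..u, C * (C * (b₀ - τ)) ^ n / n.factorial
          = -((C * (b₀ - u)) ^ (n+1) / (n+1).factorial) := by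
        have : ∀ τ : ℝ, C * (C * (b₀ - τ)) ^ n / n.factorial
            = (C ^ (n+1) / n.factorial) * (b₀ - τ) ^ n := by
          intro τ; rw [mul_pow]; ring
        simp_rw [this]
        rw [intervalIntegral.integral_const_mul]
        have := intervalIntegral.integral_comp_sub_left (fun x => x ^ n) b₀ (a := b₀) (b := u)
        have hfac : (((n+1).factorial : ℕ) : ℝ) = ((n:ℝ)+1) * n.factorial := by
          rw [Nat.factorial_succ]; push_cast; ring
        rw [this, integral_pow, sub_self, zero_pow (Nat.succ_ne_zero n), zero_sub, mul_pow C (b₀ - u) (n+1), hfac]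
        have h1 : ((n.factorial : ℕ) : ℝ) ≠ 0 := Nat.cast_ne_zero.2 n.factorial_ne_zero
        have h2 : ((n:ℝ)+1) ≠ 0 := by positivity
        field_simp
        try ring
        try exact Or.inl trivial
      rw [hval] at hle
      refine hle.trans ?_
      have hnn : (0:ℝ) ≤ (C * (b₀ - u)) ^ (n+1) / (n+1).factorial :=
        div_nonneg (pow_nonneg (mul_nonneg hC (by linarith)) _) (by positivity)
      rw [abs_neg, abs_of_nonneg hnn,
        abs_of_nonpos (by linarith : u - b₀ ≤ 0), neg_sub]


include hab hA hM hM0 in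
lemma pb_norm_le {b₀ : ℝ} (hb₀ : b₀ ∈ Icc a b) (n : ℕ) {u : ℝ} (hu : u ∈ Icc a b) :
    ‖pbIter A b₀ n u‖ ≤ ((d * M) * (b - a)) ^ n / n.factorial := by
  refine ((pb_cont_bound A hab hA hM hM0 hb₀ n).2 u hu).trans ?_
  have h1 : |u - b₀| ≤ b - a := by
    rw [abs_sub_le_iff]; constructor <;> linarith [hu.2, hb₀.1, hu.1, hb₀.2]
  gcongr


include hab hA hM hM0 in
lemma pb_summable {b₀ : ℝ} (hb₀ : b₀ ∈ Icc a b) {u : ℝ} (hu : u ∈ Icc a b) :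
    Summable (fun n => pbIter A b₀ n u) :=
  Summable.of_norm_bounded (Real.summable_pow_div_factorial ((d * M) * (b - a)))
    (fun n => pb_norm_le A hab hA hM hM0 hb₀ n hu)

include hab hA hM hM0 in
lemma P_cont {b₀ : ℝ} (hb₀ : b₀ ∈ Icc a b) :
    ContinuousOn (fun u => ∑' n, pbIter A b₀ n u) (Icc a b) := by
  refine (tendstoUniformlyOn_tsum (Real.summable_pow_div_factorial ((d * M) * (b - a)))
    (fun n u hu => pb_norm_le A hab hA hM hM0 hb₀ n hu)).continuousOn ?_
  apply Filter.Eventually.frequently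
  filter_upwards with N
  exact continuousOn_finset_sum _ (fun n _ => (pb_cont_bound A hab hA hM hM0 hb₀ n).1)

lemma P_self (b₀ : ℝ) : (∑' n, pbIter A b₀ n b₀) = 1 := by
  rw [tsum_eq_single 0]
  · rfl
  · intro n hn
    obtain ⟨m, rfl⟩ := Nat.exists_eq_succ_of_ne_zero hn
    show (∫ τ in b₀..b₀, A τ * pbIter A b₀ m τ) = 0
    exact intervalIntegral.integral_same

include hab hA hM hM0 in
lemma swap_tsum_integral {f : ℕ → ℝ → Matrix (Fin d) (Fin d) ℝ}
    (hf : ∀ n, ContinuousOn (f n) (Icc a b)) {c : ℕ → ℝ}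
    (hc : ∀ n, ∀ τ ∈ Icc a b, ‖f n τ‖ ≤ c n) (hcs : Summable c)
    {b₀ u : ℝ} (hb₀ : b₀ ∈ Icc a b) (hu : u ∈ Icc a b) :
    (∫ τ in b₀..u, ∑' n, f n τ) = ∑' n, ∫ τ in b₀..u, f n τ := by
  have hc0 : ∀ n, 0 ≤ c n := fun n => (norm_nonneg _).trans (hc n b₀ hb₀)
  have key : ∀ c' e' : ℝ, c' ∈ Icc a b → e' ∈ Icc a b → c' ≤ e' →
      (∫ τ in Ioc c' e', ∑' n, f n τ) = ∑' n, ∫ τ in Ioc c' e', f n τ := by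
    intro c' e' hc' he' hce
    have hsub : Ioc c' e' ⊆ Icc a b := fun x hx =>
      ⟨hc'.1.trans (le_of_lt hx.1), hx.2.trans he'.2⟩
    apply MeasureTheory.integral_tsum
    · intro n
      exact ((hf n).mono hsub).aestronglyMeasurable measurableSet_Ioc
    · have hb : ∀ n, (∫⁻ τ in Ioc c' e', ‖f n τ‖₊) ≤
          ENNReal.ofReal (c n) * volume (Ioc c' e') := by
        intro n
        calc (∫⁻ τ in Ioc c' e', ‖f n τ‖₊)
            ≤ ∫⁻ _ in Ioc c' e', ENNReal.ofReal (c n) := by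
              apply setLIntegral_mono measurable_const
              intro τ hτ
              rw [← ENNReal.ofReal_coe_nnreal, coe_nnnorm]
              exact ENNReal.ofReal_le_ofReal (hc n τ (hsub hτ))
          _ = ENNReal.ofReal (c n) * volume (Ioc c' e') := by
              rw [setLIntegral_const]
      refine ne_top_of_le_ne_top ?_ (ENNReal.tsum_le_tsum hb)
      rw [ENNReal.tsum_mul_right, ← ENNReal.ofReal_tsum_of_nonneg hc0 hcs]
      exact ENNReal.mul_ne_top ENNReal.ofReal_ne_top (measure_Ioc_lt_top).ne
  rcases le_total b₀ u with h | h
  · rw [intervalIntegral.integral_of_le h, key b₀ u hb₀ hu h]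
    exact tsum_congr fun n => (intervalIntegral.integral_of_le h).symm
  · rw [intervalIntegral.integral_symm u b₀, intervalIntegral.integral_of_le h,
      key u b₀ hu hb₀ h, ← tsum_neg]
    exact tsum_congr fun n => by
      rw [intervalIntegral.integral_symm u b₀, intervalIntegral.integral_of_le h]

include hab hA hM hM0 in
lemma P_integral_eq {b₀ : ℝ} (hb₀ : b₀ ∈ Icc a b) {u : ℝ} (hu : u ∈ Icc a b) :
    (∑' n, pbIter A b₀ n u)
      = 1 + ∫ τ in b₀..u, A τ * (∑' n, pbIter A b₀ n τ) := by
  have h1 : (∫ τ in b₀..u, A τ * (∑' n, pbIter A b₀ n τ))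
      = ∫ τ in b₀..u, ∑' n, A τ * pbIter A b₀ n τ := by
    apply intervalIntegral.integral_congr
    intro τ hτ
    have hτ' : τ ∈ Icc a b := uIcc_subset_Icc hb₀ hu hτ
    exact (Summable.tsum_mul_left (A τ) (pb_summable A hab hA hM hM0 hb₀ hτ')).symm
  have h2 : (∫ τ in b₀..u, ∑' n, A τ * pbIter A b₀ n τ)
      = ∑' n, ∫ τ in b₀..u, A τ * pbIter A b₀ n τ := by
    apply swap_tsum_integral A hab hA hM hM0
      (f := fun n τ => A τ * pbIter A b₀ n τ)
      (c := fun n => (d * M) * (((d * M) * (b - a)) ^ n / n.factorial)) _ _ _ hb₀ hu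
    · intro n
      exact hA.mul (pb_cont_bound A hab hA hM hM0 hb₀ n).1
    · intro n τ hτ
      refine (key_bound A hM hM0 τ hτ _).trans ?_
      exact mul_le_mul_of_nonneg_left (pb_norm_le A hab hA hM hM0 hb₀ n hτ) (by positivity)
    · exact (Real.summable_pow_div_factorial ((d * M) * (b - a))).mul_left _
  rw [h1, h2]
  have h3 : ∀ n : ℕ, (∫ τ in b₀..u, A τ * pbIter A b₀ n τ) = pbIter A b₀ (n+1) u :=
    fun n => rfl
  rw [tsum_congr h3 , Summable.tsum_eq_zero_add (pb_summable A hab hA hM hM0 hb₀ hu)]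
  rfl

include hab hA hM hM0 in
lemma P_hasDeriv {b₀ : ℝ} (hb₀ : b₀ ∈ Icc a b) {u : ℝ} (hu : u ∈ Icc a b) :
    HasDerivWithinAt (fun x => ∑' n, pbIter A b₀ n x)
      (A u * ∑' n, pbIter A b₀ n u) (Icc a b) u := by
  set g : ℝ → Matrix (Fin d) (Fin d) ℝ := fun τ => A τ * ∑' n, pbIter A b₀ n τ with hg
  have gcont : ContinuousOn g (Icc a b) := hA.mul (P_cont A hab hA hM hM0 hb₀)
  haveI : Fact (u ∈ Icc a b) := ⟨hu⟩
  have hD : HasDerivWithinAt (fun x => ∫ τ in b₀..x, g τ) (g u) (Icc a b) u := by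
    apply intervalIntegral.integral_hasDerivWithinAt_right
      ((gcont.mono (uIcc_subset_Icc hb₀ hu)).intervalIntegrable)
      ⟨Icc a b, self_mem_nhdsWithin, gcont.aestronglyMeasurable measurableSet_Icc⟩
      (gcont u hu)
  have hD' : HasDerivWithinAt (fun x => 1 + ∫ τ in b₀..x, g τ) (g u) (Icc a b) u := by
    exact (hasDerivWithinAt_const u (Icc a b)
      (1 : Matrix (Fin d) (Fin d) ℝ)).add hD |>.congr_deriv (zero_add _)
  exact hD'.congr (fun x hx => P_integral_eq A hab hA hM hM0 hb₀ hx)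
    (P_integral_eq A hab hA hM hM0 hb₀ hu)

end

end PB

theorem stmt13 {d : ℕ} (hd : 1 ≤ d) (A : ℝ → Matrix (Fin d) (Fin d) ℝ)
    (I : Set ℝ) (hI : I.OrdConnected) (hA : ContinuousOn A I) :
    ∀ t ∈ I, ∀ s ∈ I,
      IsUnit (∑' n : ℕ, pbIter A s n t) ∧
      (∑' n : ℕ, pbIter A s n t)⁻¹ = ∑' n : ℕ, pbIter A t n s := by
  intro t ht s hs
  classical
  set a : ℝ := min t s with ha
  set b : ℝ := max t s with hb
  have hab : a ≤ b := min_le_max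
  have hJI : Set.Icc a b ⊆ I := by
    rw [show Set.Icc a b = Set.uIcc t s from rfl]
    exact hI.uIcc_subset ht hs
  have hA' : ContinuousOn A (Set.Icc a b) := hA.mono hJI
  obtain ⟨M₀, hM₀⟩ := isCompact_Icc.exists_bound_of_continuousOn hA'
  set M : ℝ := max M₀ 0 with hMdef
  have hM : ∀ u ∈ Set.Icc a b, ‖A u‖ ≤ M := fun u hu => (hM₀ u hu).trans (le_max_left _ _)
  have hM0 : 0 ≤ M := le_max_right _ _
  have ht' : t ∈ Set.Icc a b := ⟨min_le_left _ _, le_max_left _ _⟩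
  have hs' : s ∈ Set.Icc a b := ⟨min_le_right _ _, le_max_right _ _⟩
  -- the clamped vector field
  set proj : ℝ → ℝ := fun τ => max a (min τ b) with hproj
  have hprojmem : ∀ τ, proj τ ∈ Set.Icc a b := fun τ =>
    ⟨le_max_left _ _, max_le hab (min_le_right _ _)⟩
  have hprojeq : ∀ τ ∈ Set.Icc a b, proj τ = τ := fun τ hτ => by
    simp only [hproj]
    rw [min_eq_left hτ.2, max_eq_right hτ.1]
  set v : ℝ → Matrix (Fin d) (Fin d) ℝ → Matrix (Fin d) (Fin d) ℝ :=
    fun τ X => A (proj τ) * X with hv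
  set K : NNReal := Real.toNNReal (d * M) with hK
  have hKcoe : (K : ℝ) = d * M := Real.coe_toNNReal _ (by positivity)
  have hLip : ∀ τ : ℝ, LipschitzOnWith K (v τ) Set.univ := by
    intro τ
    rw [lipschitzOnWith_univ]
    apply LipschitzWith.of_dist_le_mul
    intro X Y
    rw [dist_eq_norm, dist_eq_norm, hKcoe, ← mul_sub]
    exact PB.key_bound A hM hM0 (proj τ) (hprojmem τ) (X - Y)
  -- the two solutions
  set f : ℝ → Matrix (Fin d) (Fin d) ℝ := fun u => ∑' n, pbIter A s n u with hf
  set Cst : Matrix (Fin d) (Fin d) ℝ := ∑' n, pbIter A s n t with hCst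
  set L := LinearMap.toContinuousLinearMap
    (LinearMap.mulRight ℝ Cst : Matrix (Fin d) (Fin d) ℝ →ₗ[ℝ] Matrix (Fin d) (Fin d) ℝ) with hL
  set g : ℝ → Matrix (Fin d) (Fin d) ℝ := fun u => (∑' n, pbIter A t n u) * Cst with hgdef
  have hfc : ContinuousOn f (Set.Icc a b) := PB.P_cont A hab hA' hM hM0 hs'
  have hgc : ContinuousOn g (Set.Icc a b) := by
    have : g = fun u => L (∑' n, pbIter A t n u) := rfl
    rw [this]
    exact L.continuous.comp_continuousOn (PB.P_cont A hab hA' hM hM0 ht')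
  have hfd : ∀ u ∈ Set.Icc a b, HasDerivWithinAt f (v u (f u)) (Set.Icc a b) u := by
    intro u hu
    have := PB.P_hasDeriv A hab hA' hM hM0 hs' hu
    rwa [show v u (f u) = A u * ∑' n, pbIter A s n u by
      simp only [hv, hf]; rw [hprojeq u hu] ]
  have hgd : ∀ u ∈ Set.Icc a b, HasDerivWithinAt g (v u (g u)) (Set.Icc a b) u := by
    intro u hu
    have h1 := PB.P_hasDeriv A hab hA' hM hM0 ht' hu
    have h2 : HasDerivWithinAt (fun x => L (∑' n, pbIter A t n x))
        (L (A u * ∑' n, pbIter A t n u)) (Set.Icc a b) u :=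
      L.hasFDerivAt.comp_hasDerivWithinAt u h1
    have h3 : (fun x => L (∑' n, pbIter A t n x)) = g := rfl
    rw [h3] at h2
    rwa [show v u (g u) = L (A u * ∑' n, pbIter A t n u) by
      show A (proj u) * ((∑' n, pbIter A t n u) * Cst)
        = (A u * ∑' n, pbIter A t n u) * Cst
      rw [hprojeq u hu, mul_assoc] ]
  have hftgt : f t = g t := by
    show (∑' n, pbIter A s n t) = (∑' n, pbIter A t n t) * Cst
    rw [PB.P_self A t, one_mul, hCst]
  have heq : f s = g s := by
    rcases le_total t s with h | h
    · have hIcc : Set.Icc t s = Set.Icc a b := by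
        rw [ha, hb, min_eq_left h, max_eq_right h]
      have := ODE_solution_unique_of_mem_Icc_right (s := fun _ => (Set.univ : Set _)) (fun τ _ => hLip τ)
        (hfc.mono hIcc.le)
        (fun u hu => (hfd u (hIcc ▸ Set.Ico_subset_Icc_self hu)).mono_of_mem_nhdsWithin
          (hIcc ▸ Icc_mem_nhdsGE_of_mem hu))
        (fun _ _ => Set.mem_univ _)
        (hgc.mono hIcc.le)
        (fun u hu => (hgd u (hIcc ▸ Set.Ico_subset_Icc_self hu)).mono_of_mem_nhdsWithin
          (hIcc ▸ Icc_mem_nhdsGE_of_mem hu))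
        (fun _ _ => Set.mem_univ _) hftgt
      exact this ⟨h, le_refl s⟩
    · have hIcc : Set.Icc s t = Set.Icc a b := by
        rw [ha, hb, min_eq_right h, max_eq_left h]
      have := ODE_solution_unique_of_mem_Icc_left (s := fun _ => (Set.univ : Set _)) (fun τ _ => hLip τ)
        (hfc.mono hIcc.le)
        (fun u hu => (hfd u (hIcc ▸ Set.Ioc_subset_Icc_self hu)).mono_of_mem_nhdsWithin
          (hIcc ▸ Icc_mem_nhdsLE_of_mem hu))
        (fun _ _ => Set.mem_univ _)
        (hgc.mono hIcc.le)
        (fun u hu => (hgd u (hIcc ▸ Set.Ioc_subset_Icc_self hu)).mono_of_mem_nhdsWithin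
          (hIcc ▸ Icc_mem_nhdsLE_of_mem hu))
        (fun _ _ => Set.mem_univ _) hftgt
      exact this ⟨le_refl s, h⟩
  have h1 : (∑' n : ℕ, pbIter A t n s) * (∑' n : ℕ, pbIter A s n t) = 1 := by
    have : f s = (∑' n, pbIter A t n s) * Cst := heq
    rw [hf] at this
    simp only [PB.P_self A s] at this
    rw [hCst] at this
    exact this.symm
  have h2 : (∑' n : ℕ, pbIter A s n t) * (∑' n : ℕ, pbIter A t n s) = 1 :=
    mul_eq_one_comm.mpr h1
  exact ⟨⟨⟨_, _, h2, h1⟩, rfl⟩, Matrix.inv_eq_left_inv h1⟩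
end

section
/- Let A be a continuous matrix-valued function and b a continuous vector-valued function on an interval I containing t₀, and let x₀ ∈ ℝ^d. Then the function x(t) = Φ_A(t; t₀) · (x₀ + ∫_{t₀}^t Φ_A(t₀; τ) · b(τ) dτ), with Φ_A given by the Peano–Baker series, is differentiable on I and satisfies the inhomogeneous Cauchy problem x'(t) = A(t) · x(t) + b(t) for all t ∈ I, with x(t₀) = x₀. -/
attribute [local instance] Matrix.normedAddCommGroup Matrix.normedSpace

open Matrix

open Set intervalIntegral MeasureTheory Filter Topology

variable {d : ℕ}

lemma mat_norm_mul_le (X Y : Matrix (Fin d) (Fin d) ℝ) :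
    ‖X * Y‖ ≤ d * ‖X‖ * ‖Y‖ := by
  have h0 : (0:ℝ) ≤ d * ‖X‖ * ‖Y‖ := by positivity
  rw [Matrix.norm_le_iff h0]
  intro i j
  calc ‖(X * Y) i j‖ = ‖∑ k, X i k * Y k j‖ := by rw [Matrix.mul_apply]
    _ ≤ ∑ k, ‖X i k * Y k j‖ := norm_sum_le _ _
    _ ≤ ∑ _k : Fin d, ‖X‖ * ‖Y‖ := by
        refine Finset.sum_le_sum fun k _ => ?_
        rw [norm_mul]
        exact mul_le_mul (Matrix.norm_entry_le_entrywise_sup_norm X)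
          (Matrix.norm_entry_le_entrywise_sup_norm Y) (norm_nonneg _) (norm_nonneg _)
    _ = d * ‖X‖ * ‖Y‖ := by simp [mul_assoc]

lemma mat_norm_one_le : ‖(1 : Matrix (Fin d) (Fin d) ℝ)‖ ≤ 1 := by
  rw [Matrix.norm_le_iff zero_le_one]
  intro i j
  by_cases h : i = j <;> simp [Matrix.one_apply, h]

/-- Localization: within-continuity on an ord-connected set from continuity within compact
subintervals. -/
lemma continuousWithinAt_of_Icc {E : Type*} [TopologicalSpace E] {g : ℝ → E} {I : Set ℝ}
    {t : ℝ} (ht : t ∈ I)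
    (h : ∀ a b : ℝ, a ∈ I → b ∈ I → a ≤ t → t ≤ b → ContinuousWithinAt g (Icc a b) t) :
    ContinuousWithinAt g I t := by
  have hR : ContinuousWithinAt g (I ∩ Ici t) t := by
    by_cases hu : ∃ u ∈ I, t < u
    · obtain ⟨u, huI, htu⟩ := hu
      refine (h t u ht huI le_rfl htu.le).mono_of_mem_nhdsWithin ?_
      refine mem_nhdsWithin.2 ⟨Iio u, isOpen_Iio, htu, ?_⟩
      rintro y ⟨hy1, hy2, hy3⟩
      exact ⟨hy3, hy1.le⟩
    · push_neg at hu
      have hsub : I ∩ Ici t ⊆ {t} := by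
        rintro y ⟨hy1, hy2⟩
        exact le_antisymm (hu y hy1) hy2
      exact (continuousWithinAt_singleton (f := g) (x := t)).mono hsub
  have hL : ContinuousWithinAt g (I ∩ Iic t) t := by
    by_cases hu : ∃ u ∈ I, u < t
    · obtain ⟨u, huI, htu⟩ := hu
      refine (h u t huI ht htu.le le_rfl).mono_of_mem_nhdsWithin ?_
      refine mem_nhdsWithin.2 ⟨Ioi u, isOpen_Ioi, htu, ?_⟩
      rintro y ⟨hy1, hy2, hy3⟩
      exact ⟨hy1.le, hy3⟩
    · push_neg at hu
      have hsub : I ∩ Iic t ⊆ {t} := by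
        rintro y ⟨hy1, hy2⟩
        exact le_antisymm hy2 (hu y hy1)
      exact (continuousWithinAt_singleton (f := g) (x := t)).mono hsub
  have : ContinuousWithinAt g ((I ∩ Iic t) ∪ (I ∩ Ici t)) t := hL.union hR
  refine this.mono fun y hy => ?_
  rcases le_total y t with h' | h'
  · exact Or.inl ⟨hy, h'⟩
  · exact Or.inr ⟨hy, h'⟩

lemma hasDerivWithinAt_of_subset_singleton {E : Type*} [NormedAddCommGroup E]
    [NormedSpace ℝ E] (g : ℝ → E) (c : E) (t : ℝ) {S : Set ℝ} (hS : S ⊆ {t}) :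
    HasDerivWithinAt g c S t := by
  have h1 : HasDerivWithinAt g c {t} t := by
    rw [HasDerivWithinAt, nhdsWithin_singleton]
    simp [hasDerivAtFilter_iff_isLittleO, Asymptotics.isLittleO_pure]
  exact h1.mono hS

/-- FTC: derivative of a primitive within an ord-connected set. -/
lemma primitive_hasDerivWithinAt {E : Type*} [NormedAddCommGroup E] [NormedSpace ℝ E] [CompleteSpace E]
    {f : ℝ → E} {I : Set ℝ} (hI : I.OrdConnected) (hf : ContinuousOn f I)
    {s t : ℝ} (hs : s ∈ I) (ht : t ∈ I) :
    HasDerivWithinAt (fun u => ∫ τ in s..u, f τ) (f t) I t := by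
  have hint : ∀ u ∈ I, ∀ v ∈ I, IntervalIntegrable f volume u v := fun u hu v hv =>
    (hf.mono (hI.uIcc_subset hu hv)).intervalIntegrable
  have hR : HasDerivWithinAt (fun u => ∫ τ in s..u, f τ) (f t) (I ∩ Ici t) t := by
    by_cases hu : ∃ u ∈ I, t < u
    · obtain ⟨u, huI, htu⟩ := hu
      have hIccI : Icc t u ⊆ I := hI.out ht huI
      have hIoc : Ioc t u ∈ 𝓝[>] t := Ioc_mem_nhdsGT_of_mem ⟨le_rfl, htu⟩
      have hmeas : StronglyMeasurableAtFilter f (𝓝[>] t) :=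
        ⟨Ioc t u, hIoc, ((hf.mono (Ioc_subset_Icc_self.trans hIccI)).aestronglyMeasurable
          measurableSet_Ioc)⟩
      have hcont : ContinuousWithinAt f (Ioi t) t := by
        have h1 : ContinuousWithinAt f (Ioc t u) t :=
          (hf t ht).mono (Ioc_subset_Icc_self.trans hIccI)
        exact h1.mono_of_mem_nhdsWithin hIoc
      have key : HasDerivWithinAt (fun v => ∫ τ in s..v, f τ) (f t) (Ici t) t :=
        intervalIntegral.integral_hasDerivWithinAt_right (hint s hs t ht) hmeas hcont
      exact key.mono inter_subset_right
    · push_neg at hu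
      have hsub : I ∩ Ici t ⊆ {t} := fun y ⟨hy1, hy2⟩ => le_antisymm (hu y hy1) hy2
      exact hasDerivWithinAt_of_subset_singleton _ _ _ hsub
  have hL : HasDerivWithinAt (fun u => ∫ τ in s..u, f τ) (f t) (I ∩ Iic t) t := by
    by_cases hu : ∃ u ∈ I, u < t
    · obtain ⟨u, huI, htu⟩ := hu
      have hIccI : Icc u t ⊆ I := hI.out huI ht
      have hIcc : Icc u t ∈ 𝓝[≤] t := Icc_mem_nhdsLE_of_mem ⟨htu, le_rfl⟩
      have hmeas : StronglyMeasurableAtFilter f (𝓝[≤] t) :=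
        ⟨Icc u t, hIcc, ((hf.mono hIccI).aestronglyMeasurable measurableSet_Icc)⟩
      have hcont : ContinuousWithinAt f (Iic t) t := by
        have h1 : ContinuousWithinAt f (Icc u t) t := (hf t ht).mono hIccI
        exact h1.mono_of_mem_nhdsWithin hIcc
      have key : HasDerivWithinAt (fun v => ∫ τ in s..v, f τ) (f t) (Iic t) t :=
        intervalIntegral.integral_hasDerivWithinAt_right (hint s hs t ht) hmeas hcont
      exact key.mono inter_subset_right
    · push_neg at hu
      have hsub : I ∩ Iic t ⊆ {t} := fun y ⟨hy1, hy2⟩ => le_antisymm hy2 (hu y hy1)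
      exact hasDerivWithinAt_of_subset_singleton _ _ _ hsub
  refine (hL.union hR).mono fun y hy => ?_
  rcases le_total y t with h' | h'
  · exact Or.inl ⟨hy, h'⟩
  · exact Or.inr ⟨hy, h'⟩

variable {A : ℝ → Matrix (Fin d) (Fin d) ℝ} {I : Set ℝ}

lemma pbIter_succ_eq (s : ℝ) (n : ℕ) (t : ℝ) :
    pbIter A s (n + 1) t = ∫ τ in s..t, A τ * pbIter A s n τ := rfl

lemma pbIter_contOn (hI : I.OrdConnected) (hA : ContinuousOn A I) {s : ℝ} (hs : s ∈ I) :
    ∀ n, ContinuousOn (pbIter A s n) I := by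
  intro n
  induction n with
  | zero => exact continuousOn_const
  | succ n ih =>
      have hmul : ContinuousOn (fun τ => A τ * pbIter A s n τ) I := hA.mul ih
      exact fun t ht => (primitive_hasDerivWithinAt hI hmul hs ht).continuousWithinAt

lemma pbIter_hasDeriv (hI : I.OrdConnected) (hA : ContinuousOn A I) {s : ℝ} (hs : s ∈ I)
    (n : ℕ) {t : ℝ} (ht : t ∈ I) :
    HasDerivWithinAt (pbIter A s (n + 1)) (A t * pbIter A s n t) I t :=
  primitive_hasDerivWithinAt hI (hA.mul (pbIter_contOn hI hA hs n)) hs ht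

lemma abs_integral_abs_pow (s u : ℝ) (n : ℕ) :
    |∫ τ in s..u, |τ - s| ^ n| = |u - s| ^ (n + 1) / (n + 1) := by
  rcases le_total s u with h | h
  · have h1 : ∫ τ in s..u, |τ - s| ^ n = ∫ τ in s..u, (τ - s) ^ n := by
      refine intervalIntegral.integral_congr fun τ hτ => ?_
      rw [uIcc_of_le h] at hτ
      rw [abs_of_nonneg (by linarith [hτ.1])]
    have h2 : ∫ τ in s..u, (τ - s) ^ n = (u - s) ^ (n + 1) / (n + 1) := by
      have := intervalIntegral.integral_comp_sub_right (a := s) (b := u)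
        (fun x => x ^ n) s
      rw [this, sub_self, integral_pow]
      push_cast
      ring
    rw [h1, h2, abs_of_nonneg (div_nonneg (pow_nonneg (by linarith) _) (by positivity)),
      abs_of_nonneg (by linarith)]
  · have h1 : ∫ τ in s..u, |τ - s| ^ n = ∫ τ in s..u, (s - τ) ^ n := by
      refine intervalIntegral.integral_congr fun τ hτ => ?_
      rw [uIcc_of_ge h] at hτ
      rw [abs_of_nonpos (by linarith [hτ.2]), neg_sub]
    have h2 : ∫ τ in s..u, (s - τ) ^ n = -((s - u) ^ (n + 1) / (n + 1)) := by
      have := intervalIntegral.integral_comp_sub_left (a := s) (b := u)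
        (fun x => x ^ n) s
      rw [this, sub_self, integral_pow]
      push_cast
      ring
    rw [h1, h2, abs_neg, abs_of_nonneg (div_nonneg (pow_nonneg (by linarith) _)
      (by positivity)), abs_of_nonpos (by linarith)]
    ring_nf

lemma pbIter_norm_le (hI : I.OrdConnected) (hA : ContinuousOn A I) {s t : ℝ}
    (hs : s ∈ I) (ht : t ∈ I) {C : ℝ}
    (hC : ∀ τ ∈ uIcc s t, (d : ℝ) * ‖A τ‖ ≤ C) :
    ∀ n, ∀ u ∈ uIcc s t, ‖pbIter A s n u‖ ≤ (C * |u - s|) ^ n / n.factorial := by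
  have hC0 : 0 ≤ C := le_trans (by positivity) (hC s left_mem_uIcc)
  have hKI : uIcc s t ⊆ I := hI.uIcc_subset hs ht
  intro n
  induction n with
  | zero => intro u _; simpa [pbIter] using mat_norm_one_le
  | succ n ih =>
      intro u hu
      have hsubK : uIcc s u ⊆ uIcc s t := uIcc_subset_uIcc left_mem_uIcc hu
      have hbound : ∀ τ ∈ uIcc s u,
          ‖A τ * pbIter A s n τ‖ ≤ C * ((C * |τ - s|) ^ n / n.factorial) := by
        intro τ hτ
        have hτK := hsubK hτ
        calc ‖A τ * pbIter A s n τ‖ ≤ (d : ℝ) * ‖A τ‖ * ‖pbIter A s n τ‖ :=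
              mat_norm_mul_le _ _
          _ ≤ C * ((C * |τ - s|) ^ n / n.factorial) := by
              refine mul_le_mul (hC τ hτK) (ih τ hτK) (norm_nonneg _) hC0
      have hgInt : IntervalIntegrable (fun τ => C * ((C * |τ - s|) ^ n / n.factorial))
          volume s u := by
        apply Continuous.intervalIntegrable
        exact continuous_const.mul
          ((((continuous_const.mul
            ((continuous_id.sub continuous_const).abs)).pow n)).div_const _)
      have h1 : ‖pbIter A s (n + 1) u‖ ≤
          |∫ τ in s..u, C * ((C * |τ - s|) ^ n / n.factorial)| := by
        rw [pbIter_succ_eq]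
        refine intervalIntegral.norm_integral_le_abs_of_norm_le ?_ hgInt
        refine (ae_restrict_iff' measurableSet_uIoc).2 (Filter.Eventually.of_forall ?_)
        intro τ hτ
        exact hbound τ (uIoc_subset_uIcc hτ)
      have h2 : |∫ τ in s..u, C * ((C * |τ - s|) ^ n / n.factorial)| =
          (C * |u - s|) ^ (n + 1) / (n + 1).factorial := by
        have : (fun τ => C * ((C * |τ - s|) ^ n / n.factorial)) =
            fun τ => (C ^ (n+1) / n.factorial) * |τ - s| ^ n := by
          funext τ; rw [mul_pow]; ring
        rw [this, intervalIntegral.integral_const_mul, abs_mul,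
          abs_integral_abs_pow s u n, abs_of_nonneg (by positivity),
          Nat.factorial_succ, mul_pow]
        push_cast
        rw [div_mul_div_comm]
        ring
      calc ‖pbIter A s (n + 1) u‖ ≤ _ := h1
        _ = _ := h2

noncomputable def Phi (A : ℝ → Matrix (Fin d) (Fin d) ℝ) (s t : ℝ) :
    Matrix (Fin d) (Fin d) ℝ := ∑' n, pbIter A s n t

lemma exists_matBound (hI : I.OrdConnected) (hA : ContinuousOn A I) {a b : ℝ}
    (ha : a ∈ I) (hb : b ∈ I) :
    ∃ C : ℝ, 0 ≤ C ∧ ∀ τ ∈ uIcc a b, (d : ℝ) * ‖A τ‖ ≤ C := by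
  obtain ⟨C0, hC0⟩ := isCompact_uIcc.exists_bound_of_continuousOn
    (hA.mono (hI.uIcc_subset ha hb))
  refine ⟨d * max C0 0, by positivity, fun τ hτ => ?_⟩
  exact mul_le_mul_of_nonneg_left ((hC0 τ hτ).trans (le_max_left _ _)) (by positivity)

lemma abs_sub_le_of_mem_uIcc {s t τ : ℝ} (hτ : τ ∈ uIcc s t) : |τ - s| ≤ |t - s| := by
  rcases le_total s t with h | h
  · rw [uIcc_of_le h] at hτ
    rw [abs_of_nonneg (by linarith [hτ.1]), abs_of_nonneg (by linarith)]
    linarith [hτ.2]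
  · rw [uIcc_of_ge h] at hτ
    rw [abs_of_nonpos (by linarith [hτ.2]), abs_of_nonpos (by linarith)]
    linarith [hτ.1]

lemma phi_summable (hI : I.OrdConnected) (hA : ContinuousOn A I) {s t : ℝ}
    (hs : s ∈ I) (ht : t ∈ I) : Summable fun n => pbIter A s n t := by
  obtain ⟨C, hC0, hC⟩ := exists_matBound hI hA hs ht
  refine Summable.of_norm_bounded (g := fun n => (C * |t - s|) ^ n / n.factorial)
    (Real.summable_pow_div_factorial _) (fun n => ?_)
  exact pbIter_norm_le hI hA hs ht hC n t right_mem_uIcc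

/-- left-multiplication by a fixed matrix, as a CLM. -/
noncomputable def mulLeftCLM (M : Matrix (Fin d) (Fin d) ℝ) :
    Matrix (Fin d) (Fin d) ℝ →L[ℝ] Matrix (Fin d) (Fin d) ℝ :=
  LinearMap.toContinuousLinearMap (LinearMap.mulLeft ℝ M)

@[simp] lemma mulLeftCLM_apply (M X : Matrix (Fin d) (Fin d) ℝ) :
    mulLeftCLM M X = M * X := rfl

lemma phi_hasSum (hI : I.OrdConnected) (hA : ContinuousOn A I) {s t : ℝ}
    (hs : s ∈ I) (ht : t ∈ I) :
    HasSum (fun n => pbIter A s n t) (Phi A s t) :=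
  (phi_summable hI hA hs ht).hasSum

instance matPseudoMetrizable : TopologicalSpace.PseudoMetrizableSpace (Matrix (Fin d) (Fin d) ℝ) :=
  inferInstanceAs (TopologicalSpace.PseudoMetrizableSpace (Fin d → Fin d → ℝ))

lemma phi_integral_eq (hI : I.OrdConnected) (hA : ContinuousOn A I) {s t : ℝ}
    (hs : s ∈ I) (ht : t ∈ I) :
    Phi A s t = 1 + ∫ τ in s..t, A τ * Phi A s τ := by
  obtain ⟨C, hC0, hC⟩ := exists_matBound hI hA hs ht
  have hKI : uIcc s t ⊆ I := hI.uIcc_subset hs ht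
  have hS : HasSum (fun n => ∫ τ in s..t, A τ * pbIter A s n τ)
      (∫ τ in s..t, A τ * Phi A s τ) := by
    refine intervalIntegral.hasSum_integral_of_dominated_convergence
      (fun n τ => C * ((C * |t - s|) ^ n / n.factorial)) (fun n => ?_) (fun n => ?_) ?_ ?_ ?_
    · exact ((hA.mul (pbIter_contOn hI hA hs n)).mono
        (uIoc_subset_uIcc.trans hKI)).aestronglyMeasurable measurableSet_uIoc
    · refine Filter.Eventually.of_forall fun τ hτ => ?_
      have hτK : τ ∈ uIcc s t := uIoc_subset_uIcc hτ
      calc ‖A τ * pbIter A s n τ‖ ≤ (d : ℝ) * ‖A τ‖ * ‖pbIter A s n τ‖ := mat_norm_mul_le _ _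
        _ ≤ C * ((C * |t - s|) ^ n / n.factorial) := by
            refine mul_le_mul (hC τ hτK) ?_ (norm_nonneg _) hC0
            refine (pbIter_norm_le hI hA hs ht hC n τ hτK).trans ?_
            have h1 : C * |τ - s| ≤ C * |t - s| :=
              mul_le_mul_of_nonneg_left (abs_sub_le_of_mem_uIcc hτK) hC0
            have h2 : (C * |τ - s|) ^ n ≤ (C * |t - s|) ^ n :=
              pow_le_pow_left₀ (by positivity) h1 n
            exact div_le_div_of_nonneg_right h2 (by positivity)
    · refine Filter.Eventually.of_forall fun τ _ => ?_
      exact (Real.summable_pow_div_factorial _).mul_left _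
    · exact intervalIntegrable_const
    · refine Filter.Eventually.of_forall fun τ hτ => ?_
      have hτI : τ ∈ I := hKI (uIoc_subset_uIcc hτ)
      have := (phi_hasSum hI hA hs hτI).mapL (mulLeftCLM (A τ))
      simp only [Function.comp_def, mulLeftCLM_apply] at this
      exact this
  have h0 : Phi A s t = pbIter A s 0 t + ∑' n, pbIter A s (n + 1) t :=
    (phi_summable hI hA hs ht).tsum_eq_zero_add
  rw [h0]
  have h1 : (∑' n, pbIter A s (n + 1) t) = ∑' n, ∫ τ in s..t, A τ * pbIter A s n τ :=
    tsum_congr fun n => rfl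
  rw [h1, hS.tsum_eq]
  rfl

lemma phi_self (A : ℝ → Matrix (Fin d) (Fin d) ℝ) (s : ℝ) : Phi A s s = 1 := by
  have h : ∀ n : ℕ, n ≠ 0 → pbIter A s n s = 0 := by
    intro n hn
    cases n with
    | zero => exact absurd rfl hn
    | succ m => exact intervalIntegral.integral_same
  rw [Phi, tsum_eq_single 0 h]
  rfl

lemma phi_contOn (hI : I.OrdConnected) (hA : ContinuousOn A I) {s : ℝ} (hs : s ∈ I) :
    ContinuousOn (Phi A s) I := by
  intro t ht
  refine continuousWithinAt_of_Icc ht fun a b ha hb hat htb => ?_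
  have hIcc : Icc a b ⊆ I := hI.out ha hb
  obtain ⟨Ca, hCa0, hCa⟩ := exists_matBound hI hA hs ha
  obtain ⟨Cb, hCb0, hCb⟩ := exists_matBound hI hA hs hb
  set C := max Ca Cb with hCdef
  set R := max |a - s| |b - s| with hRdef
  have hC0 : 0 ≤ C := le_trans hCa0 (le_max_left _ _)
  have hcov : Icc a b ⊆ uIcc s a ∪ uIcc s b := by
    intro y hy
    rcases le_total y s with h | h
    · exact Or.inl ⟨le_trans (min_le_right s a) hy.1, le_trans h (le_max_left s a)⟩
    · exact Or.inr ⟨le_trans (min_le_left s b) h, le_trans hy.2 (le_max_right s b)⟩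
  have hbnd : ∀ n : ℕ, ∀ y ∈ Icc a b, ‖pbIter A s n y‖ ≤ (C * R) ^ n / n.factorial := by
    intro n y hy
    have key : ‖pbIter A s n y‖ ≤ (C * |y - s|) ^ n / n.factorial ∧ |y - s| ≤ R := by
      rcases hcov hy with h | h
      · refine ⟨pbIter_norm_le hI hA hs ha (fun τ hτ => (hCa τ hτ).trans (le_max_left _ _))
          n y h, ?_⟩
        exact (abs_sub_le_of_mem_uIcc h).trans (le_max_left _ _)
      · refine ⟨pbIter_norm_le hI hA hs hb (fun τ hτ => (hCb τ hτ).trans (le_max_right _ _))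
          n y h, ?_⟩
        exact (abs_sub_le_of_mem_uIcc h).trans (le_max_right _ _)
    refine key.1.trans ?_
    have h2 : (C * |y - s|) ^ n ≤ (C * R) ^ n :=
      pow_le_pow_left₀ (by positivity) (mul_le_mul_of_nonneg_left key.2 hC0) n
    exact div_le_div_of_nonneg_right h2 (by positivity)
  have hcont : ContinuousOn (fun y => ∑' n, pbIter A s n y) (Icc a b) := by
    refine continuousOn_tsum (fun n => (pbIter_contOn hI hA hs n).mono hIcc)
      (Real.summable_pow_div_factorial (C * R)) hbnd
  exact (hcont t ⟨hat, htb⟩)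

lemma phi_hasDeriv (hI : I.OrdConnected) (hA : ContinuousOn A I) {s : ℝ} (hs : s ∈ I)
    {t : ℝ} (ht : t ∈ I) :
    HasDerivWithinAt (Phi A s) (A t * Phi A s t) I t := by
  have hcont : ContinuousOn (fun τ => A τ * Phi A s τ) I := hA.mul (phi_contOn hI hA hs)
  have hprim := (primitive_hasDerivWithinAt hI hcont hs ht).const_add
    (1 : Matrix (Fin d) (Fin d) ℝ)
  refine hprim.congr (fun y hy => phi_integral_eq hI hA hs hy)
    (phi_integral_eq hI hA hs ht)

lemma lin_ode_zero (hI : I.OrdConnected) (hA : ContinuousOn A I)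
    {y : ℝ → Matrix (Fin d) (Fin d) ℝ}
    (hy : ∀ t ∈ I, HasDerivWithinAt y (A t * y t) I t) {s : ℝ} (hs : s ∈ I)
    (hy0 : y s = 0) : ∀ t ∈ I, y t = 0 := by
  intro t ht
  have hcont : ∀ u ∈ I, ContinuousWithinAt y I u := fun u hu => (hy u hu).continuousWithinAt
  obtain ⟨C, hC0, hC⟩ := exists_matBound hI hA hs ht
  rcases le_total s t with hst | hst
  · have hJ : Icc s t ⊆ I := hI.out hs ht
    have key := norm_le_gronwallBound_of_norm_deriv_right_le (f := y)
      (f' := fun u => A u * y u) (δ := 0) (K := C) (ε := 0) (a := s) (b := t)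
      (fun u hu => (hcont u (hJ hu)).mono hJ)
      (fun u hu => by
        have hmem : I ∈ 𝓝[≥] u :=
          Filter.mem_of_superset (Icc_mem_nhdsGE_of_mem ⟨le_rfl, hu.2⟩)
            ((hI.out (hJ ⟨hu.1, hu.2.le⟩) ht))
        exact (hy u (hJ ⟨hu.1, hu.2.le⟩)).mono_of_mem_nhdsWithin hmem)
      (by simp [hy0])
      (fun u hu => by
        have huK : u ∈ uIcc s t := by
          rw [uIcc_of_le hst]; exact ⟨hu.1, hu.2.le⟩
        calc ‖A u * y u‖ ≤ (d : ℝ) * ‖A u‖ * ‖y u‖ := mat_norm_mul_le _ _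
          _ ≤ C * ‖y u‖ + 0 := by
              rw [add_zero]
              exact mul_le_mul_of_nonneg_right (hC u huK) (norm_nonneg _))
    have := key t ⟨hst, le_rfl⟩
    rw [gronwallBound_ε0] at this
    simpa using norm_le_zero_iff.1 (by simpa using this)
  · -- backward in time: reverse
    have hJ : Icc t s ⊆ I := hI.out ht hs
    set z : ℝ → Matrix (Fin d) (Fin d) ℝ := fun u => y (s + t - u) with hz
    have hℓmaps : ∀ u ∈ Icc t s, s + t - u ∈ Icc t s := by
      intro u hu
      constructor <;> [linarith [hu.2]; linarith [hu.1]]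
    have hzc : ContinuousOn z (Icc t s) := by
      refine ContinuousOn.comp (fun u hu => hcont u hu)
        (Continuous.continuousOn (by continuity)) (fun u hu => hJ (hℓmaps u hu))
    have key := norm_le_gronwallBound_of_norm_deriv_right_le (f := z)
      (f' := fun u => -(A (s + t - u) * y (s + t - u))) (δ := 0) (K := C) (ε := 0)
      (a := t) (b := s) hzc
      (fun u hu => by
        have hp : s + t - u ∈ Icc t s := hℓmaps u ⟨hu.1, hu.2.le⟩
        have hyp := hy (s + t - u) (hJ hp)
        have hℓ : HasDerivWithinAt (fun v : ℝ => s + t - v) (-1) (Icc u s) u :=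
          ((hasDerivAt_id u).const_sub (s + t)).hasDerivWithinAt
        have hmaps : MapsTo (fun v : ℝ => s + t - v) (Icc u s) I := by
          intro v hv
          show s + t - v ∈ I
          exact hJ ⟨by linarith [hv.2], by linarith [hu.1, hv.1]⟩
        have hcomp := HasDerivWithinAt.scomp u hyp hℓ hmaps
        have hmem : Icc u s ∈ 𝓝[≥] u := Icc_mem_nhdsGE_of_mem ⟨le_rfl, hu.2⟩
        have := hcomp.mono_of_mem_nhdsWithin hmem
        simpa [Function.comp_def, hz, neg_smul] using this)
      (by simp [hz, hy0, show s + t - t = s by ring])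
      (fun u hu => by
        have hp : s + t - u ∈ Icc t s := hℓmaps u ⟨hu.1, hu.2.le⟩
        have hpK : s + t - u ∈ uIcc s t := by
          rw [uIcc_of_ge hst]; exact hp
        calc ‖-(A (s + t - u) * y (s + t - u))‖ = ‖A (s + t - u) * y (s + t - u)‖ :=
              norm_neg _
          _ ≤ (d : ℝ) * ‖A (s + t - u)‖ * ‖y (s + t - u)‖ := mat_norm_mul_le _ _
          _ ≤ C * ‖z u‖ + 0 := by
              rw [add_zero]
              exact mul_le_mul_of_nonneg_right (hC _ hpK) (norm_nonneg _))
    have := key s ⟨hst, le_rfl⟩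
    rw [gronwallBound_ε0] at this
    have hzs : z s = y t := by simp [hz, show s + t - s = t by ring]
    rw [hzs] at this
    simpa using norm_le_zero_iff.1 (by simpa using this)

/-- right-multiplication by a fixed matrix, as a CLM. -/
noncomputable def mulRightCLM (M : Matrix (Fin d) (Fin d) ℝ) :
    Matrix (Fin d) (Fin d) ℝ →L[ℝ] Matrix (Fin d) (Fin d) ℝ :=
  LinearMap.toContinuousLinearMap (LinearMap.mulRight ℝ M)

@[simp] lemma mulRightCLM_apply (M X : Matrix (Fin d) (Fin d) ℝ) :
    mulRightCLM M X = X * M := rfl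

lemma phi_cocycle (hI : I.OrdConnected) (hA : ContinuousOn A I) {r s : ℝ}
    (hr : r ∈ I) (hs : s ∈ I) : ∀ t ∈ I, Phi A r t = Phi A s t * Phi A r s := by
  set M := Phi A r s with hM
  set y : ℝ → Matrix (Fin d) (Fin d) ℝ := fun t => Phi A s t * M - Phi A r t with hy
  have hyderiv : ∀ t ∈ I, HasDerivWithinAt y (A t * y t) I t := by
    intro t ht
    have h1 : HasDerivWithinAt (fun t => Phi A s t * M) ((A t * Phi A s t) * M) I t := by
      have := (mulRightCLM (d := d) M).hasFDerivAt.comp_hasDerivWithinAt t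
        (phi_hasDeriv hI hA hs ht)
      simp only [Function.comp_def, mulRightCLM_apply] at this
      exact this
    have h2 := h1.sub (phi_hasDeriv hI hA hr ht)
    have e : (A t * Phi A s t) * M - A t * Phi A r t = A t * y t := by
      rw [hy]; simp only [mul_sub, mul_assoc]
    exact e ▸ h2
  have hy0 : y s = 0 := by
    rw [hy]; simp [phi_self, hM]
  intro t ht
  have := lin_ode_zero hI hA hyderiv hs hy0 t ht
  rw [hy] at this
  have := sub_eq_zero.1 this
  exact this.symm

lemma phi_mul_inv (hI : I.OrdConnected) (hA : ContinuousOn A I) {r s : ℝ}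
    (hr : r ∈ I) (hs : s ∈ I) : Phi A s r * Phi A r s = 1 := by
  have := phi_cocycle hI hA hr hs r hr
  rw [phi_self] at this
  exact this.symm

lemma phi_isUnit (hI : I.OrdConnected) (hA : ContinuousOn A I) {r s : ℝ}
    (hr : r ∈ I) (hs : s ∈ I) : IsUnit (Phi A s r) :=
  ⟨⟨Phi A s r, Phi A r s, phi_mul_inv hI hA hr hs, phi_mul_inv hI hA hs hr⟩, rfl⟩

lemma phi_base_contOn (hI : I.OrdConnected) (hA : ContinuousOn A I) {c : ℝ}
    (hc : c ∈ I) : ContinuousOn (fun τ => Phi A τ c) I := by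
  have hcont : ContinuousOn (fun τ => ((Phi A c τ).det)⁻¹ • (Phi A c τ).adjugate) I := by
    have hphi := phi_contOn hI hA hc
    have hdet : ContinuousOn (fun τ => (Phi A c τ).det) I :=
      (continuous_id.matrix_det).comp_continuousOn hphi
    have hadj : ContinuousOn (fun τ => (Phi A c τ).adjugate) I :=
      (continuous_id.matrix_adjugate).comp_continuousOn hphi
    refine ContinuousOn.smul (hdet.inv₀ fun τ hτ => ?_) hadj
    exact ((Matrix.isUnit_iff_isUnit_det _).1 (phi_isUnit hI hA hτ hc)).ne_zero
  refine hcont.congr fun τ hτ => ?_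
  have h1 : (Phi A c τ)⁻¹ = Phi A τ c :=
    Matrix.inv_eq_right_inv (phi_mul_inv hI hA hτ hc)
  rw [← h1, Matrix.inv_def, Ring.inverse_eq_inv']

/-- matrix-vector multiplication, as a CLM in the matrix argument. -/
noncomputable def mulVecCLM (d : ℕ) : Matrix (Fin d) (Fin d) ℝ →L[ℝ]
    (Fin d → ℝ) →L[ℝ] (Fin d → ℝ) :=
  LinearMap.toContinuousLinearMap
    (((LinearMap.toContinuousLinearMap :
        ((Fin d → ℝ) →ₗ[ℝ] (Fin d → ℝ)) ≃ₗ[ℝ] ((Fin d → ℝ) →L[ℝ] (Fin d → ℝ))).toLinearMap).comp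
      (Matrix.toLin' : Matrix (Fin d) (Fin d) ℝ ≃ₗ[ℝ]
        ((Fin d → ℝ) →ₗ[ℝ] (Fin d → ℝ))).toLinearMap)

@[simp] lemma mulVecCLM_apply (M : Matrix (Fin d) (Fin d) ℝ) (v : Fin d → ℝ) :
    mulVecCLM d M v = M *ᵥ v := by
  simp [mulVecCLM, Matrix.toLin'_apply]

theorem stmt14 {d : ℕ} (hd : 1 ≤ d) (A : ℝ → Matrix (Fin d) (Fin d) ℝ)
    (b : ℝ → Fin d → ℝ) (I : Set ℝ) (hI : I.OrdConnected) (t₀ : ℝ) (ht₀ : t₀ ∈ I)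
    (hA : ContinuousOn A I) (hb : ContinuousOn b I) (x₀ : Fin d → ℝ)
    (x : ℝ → Fin d → ℝ)
    (hx : ∀ t, x t = (∑' n : ℕ, pbIter A t₀ n t) *ᵥ
        (x₀ + ∫ τ in t₀..t, (∑' n : ℕ, pbIter A τ n t₀) *ᵥ b τ)) :
    (∀ t ∈ I, HasDerivWithinAt x (A t *ᵥ x t + b t) I t) ∧ x t₀ = x₀ := by
  have hx' : ∀ t, x t = Phi A t₀ t *ᵥ
      (x₀ + ∫ τ in t₀..t, Phi A τ t₀ *ᵥ b τ) := hx
  set g : ℝ → Fin d → ℝ := fun τ => Phi A τ t₀ *ᵥ b τ with hgdef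
  have hg : ContinuousOn g I := by
    have houter : Continuous fun p : Matrix (Fin d) (Fin d) ℝ × (Fin d → ℝ) => p.1 *ᵥ p.2 :=
      continuous_fst.matrix_mulVec continuous_snd
    exact houter.comp_continuousOn ((phi_base_contOn hI hA ht₀).prodMk hb)
  set u : ℝ → Fin d → ℝ := fun t => x₀ + ∫ τ in t₀..t, g τ with hudef
  constructor
  · intro t ht
    have hu : HasDerivWithinAt u (g t) I t :=
      (primitive_hasDerivWithinAt hI hg ht₀ ht).const_add x₀
    have hc : HasDerivWithinAt (fun t => mulVecCLM d (Phi A t₀ t))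
        (mulVecCLM d (A t * Phi A t₀ t)) I t :=
      (mulVecCLM d).hasFDerivAt.comp_hasDerivWithinAt t (phi_hasDeriv hI hA ht₀ ht)
    have hmain := hc.clm_apply hu
    have hval : mulVecCLM d (A t * Phi A t₀ t) (u t) + mulVecCLM d (Phi A t₀ t) (g t) =
        A t *ᵥ x t + b t := by
      rw [mulVecCLM_apply, mulVecCLM_apply]
      congr 1
      · rw [hx' t, ← Matrix.mulVec_mulVec]
      · rw [hgdef]
        show Phi A t₀ t *ᵥ (Phi A t t₀ *ᵥ b t) = b t
        rw [Matrix.mulVec_mulVec, phi_mul_inv hI hA ht ht₀, Matrix.one_mulVec]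
    rw [hval] at hmain
    refine hmain.congr (fun y _ => ?_) ?_
    · rw [hx' y]; simp [hudef]
    · rw [hx' t]; simp [hudef]
  · rw [hx' t₀]
    simp [phi_self, Matrix.one_mulVec]
end

section
/- Let A be a continuous matrix-valued function and b a continuous vector-valued function on an interval I containing t₀, with A(t) · A(s) = A(s) · A(t) for all t, s ∈ I, and let x₀ ∈ ℝ^d. Then the function x(t) = exp(∫_{t₀}^t A(τ) dτ) · (x₀ + ∫_{t₀}^t exp(−∫_{t₀}^τ A(σ) dσ) · b(τ) dτ) is differentiable on I and satisfies x'(t) = A(t) · x(t) + b(t) for all t ∈ I, with x(t₀) = x₀. -/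
attribute [local instance] Matrix.normedAddCommGroup Matrix.normedSpace

open Matrix MeasureTheory NormedSpace

theorem ftc_within_aux {E : Type*} [NormedAddCommGroup E] [NormedSpace ℝ E] [CompleteSpace E]
    {f : ℝ → E} {I : Set ℝ} (hI : I.OrdConnected) (hf : ContinuousOn f I)
    {t₀ t : ℝ} (ht₀ : t₀ ∈ I) (ht : t ∈ I) :
    HasDerivWithinAt (fun s => ∫ τ in t₀..s, f τ) (f t) I t := by
  haveI := hI
  haveI : Filter.TendstoIxxClass Set.Ioc (Filter.principal I) (Filter.principal I) :=
    Filter.tendstoIxxClass_of_subset fun _ _ => Set.Ioc_subset_Icc_self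
  haveI : (nhdsWithin t I).IsMeasurablyGenerated :=
    hI.measurableSet.nhdsWithin_isMeasurablyGenerated t
  haveI : intervalIntegral.FTCFilter t (nhdsWithin t I) (nhdsWithin t I) :=
    { toTendstoIxxClass := inferInstance
      pure_le := pure_le_nhdsWithin ht
      le_nhds := inf_le_left }
  have hint : IntervalIntegrable f volume t₀ t :=
    (hf.mono (hI.uIcc_subset ht₀ ht)).intervalIntegrable
  have hmeas : StronglyMeasurableAtFilter f (nhdsWithin t I) volume :=
    ⟨I, self_mem_nhdsWithin, hf.aestronglyMeasurable hI.measurableSet⟩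
  exact intervalIntegral.integral_hasDerivWithinAt_right hint hmeas (hf t ht)

noncomputable def matL (d : ℕ) :
    Matrix (Fin d) (Fin d) ℝ →ₗ[ℝ] ((Fin d → ℝ) →L[ℝ] (Fin d → ℝ)) where
  toFun M := LinearMap.toContinuousLinearMap (Matrix.mulVecLin M)
  map_add' M N := by ext v; simp [Matrix.add_mulVec]
  map_smul' c M := by ext v; simp [Matrix.smul_mulVec]

noncomputable def matR (d : ℕ) :
    Matrix (Fin d) (Fin d) ℝ →+* ((Fin d → ℝ) →L[ℝ] (Fin d → ℝ)) where
  toFun M := LinearMap.toContinuousLinearMap (Matrix.mulVecLin M)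
  map_one' := by ext v; simp
  map_mul' M N := by ext v; simp
  map_zero' := by ext v; simp
  map_add' M N := by ext v; simp [Matrix.add_mulVec]

theorem matR_apply {d : ℕ} (M : Matrix (Fin d) (Fin d) ℝ) (v : Fin d → ℝ) :
    matR d M v = M *ᵥ v := rfl

theorem matR_continuous (d : ℕ) : Continuous (matR d) :=
  (matL d).continuous_of_finiteDimensional

theorem matR_exp {d : ℕ} (M : Matrix (Fin d) (Fin d) ℝ) :
    matR d (NormedSpace.exp M) = NormedSpace.exp (matR d M) := by
  letI : SeminormedRing (Matrix (Fin d) (Fin d) ℝ) := Matrix.linftyOpSemiNormedRing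
  letI : NormedRing (Matrix (Fin d) (Fin d) ℝ) := Matrix.linftyOpNormedRing
  letI : NormedAlgebra ℝ (Matrix (Fin d) (Fin d) ℝ) := Matrix.linftyOpNormedAlgebra
  letI : NormedAlgebra ℚ (Matrix (Fin d) (Fin d) ℝ) := .restrictScalars ℚ ℝ _
  haveI : @CompleteSpace (Matrix (Fin d) (Fin d) ℝ)
      (NormedRing.toSeminormedRing (α := Matrix (Fin d) (Fin d) ℝ)).toPseudoMetricSpace.toUniformSpace := by
    letI : NormedAddCommGroup (Matrix (Fin d) (Fin d) ℝ) := Matrix.linftyOpNormedAddCommGroup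
    exact FiniteDimensional.complete ℝ _
  letI : NormedAlgebra ℚ ((Fin d → ℝ) →L[ℝ] (Fin d → ℝ)) := .restrictScalars ℚ ℝ _
  exact map_exp (matR d) (matR_continuous d) M
theorem integral_commute_aux {E' : Type*} [NormedRing E'] [NormedAlgebra ℝ E'] [CompleteSpace E']
    {f : ℝ → E'} {a u : ℝ} (hf : IntervalIntegrable f MeasureTheory.volume a u) (c : E')
    (h : ∀ τ ∈ Set.uIcc a u, Commute (f τ) c) : Commute c (∫ τ in a..u, f τ) := by
  have h1 : (∫ τ in a..u, f τ) * c = ∫ τ in a..u, f τ * c := by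
    simpa using (((ContinuousLinearMap.mul ℝ E').flip c).intervalIntegral_comp_comm hf).symm
  have h2 : c * (∫ τ in a..u, f τ) = ∫ τ in a..u, c * f τ := by
    simpa using ((ContinuousLinearMap.mul ℝ E' c).intervalIntegral_comp_comm hf).symm
  show c * _ = _ * c
  rw [h1, h2]
  exact intervalIntegral.integral_congr fun τ hτ => ((h τ hτ).eq).symm
theorem stmt16 {d : ℕ} (hd : 1 ≤ d) (A : ℝ → Matrix (Fin d) (Fin d) ℝ)
    (b : ℝ → Fin d → ℝ) (I : Set ℝ) (hI : I.OrdConnected) (t₀ : ℝ) (ht₀ : t₀ ∈ I)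
    (hA : ContinuousOn A I) (hb : ContinuousOn b I)
    (hcomm : ∀ t ∈ I, ∀ s ∈ I, A t * A s = A s * A t) (x₀ : Fin d → ℝ)
    (x : ℝ → Fin d → ℝ)
    (hx : ∀ t, x t = NormedSpace.exp (∫ τ in t₀..t, A τ) *ᵥ
        (x₀ + ∫ τ in t₀..t, NormedSpace.exp (-∫ σ in t₀..τ, A σ) *ᵥ b τ)) :
    (∀ t ∈ I, HasDerivWithinAt x (A t *ᵥ x t + b t) I t) ∧ x t₀ = x₀ := by
  have hx0 : x t₀ = x₀ := by
    rw [hx t₀, intervalIntegral.integral_same, exp_zero, one_mulVec,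
      intervalIntegral.integral_same, add_zero]
  refine ⟨fun t ht => ?_, hx0⟩
  letI : NormedAlgebra ℚ ((Fin d → ℝ) →L[ℝ] (Fin d → ℝ)) := .restrictScalars ℚ ℝ _
  have hAhc : ContinuousOn (fun s => matR d (A s)) I :=
    (matR_continuous d).comp_continuousOn hA
  have hsub : ∀ s ∈ I, Set.uIcc t₀ s ⊆ I := fun s hs => hI.uIcc_subset ht₀ hs
  have hAint : ∀ s ∈ I, @IntervalIntegrable _
      (PseudoMetricSpace.toUniformSpace (α := Matrix (Fin d) (Fin d) ℝ)).toTopologicalSpace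
      inferInstance A volume t₀ s := fun s hs =>
    (hA.mono (hsub s hs)).intervalIntegrable
  have hAhint : ∀ s ∈ I, IntervalIntegrable (fun s => matR d (A s)) volume t₀ s := fun s hs =>
    (hAhc.mono (hsub s hs)).intervalIntegrable
  set P : ℝ → (Fin d → ℝ) →L[ℝ] (Fin d → ℝ) := fun s => ∫ τ in t₀..s, matR d (A τ)
    with hPdef
  have hφL : ∀ M : Matrix (Fin d) (Fin d) ℝ,
      LinearMap.toContinuousLinearMap (matL d) M = matR d M := fun _ => rfl
  have hφB : ∀ s ∈ I, matR d (∫ τ in t₀..s, A τ) = P s := by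
    intro s hs
    rw [← hφL, hPdef]
    simp only [← hφL]
    exact ((LinearMap.toContinuousLinearMap (matL d)).intervalIntegral_comp_comm
      (hAint s hs)).symm
  have hAhcomm : ∀ s ∈ I, ∀ u ∈ I, Commute (matR d (A s)) (matR d (A u)) := fun s hs u hu =>
    Commute.map (hcomm s hs u hu) (matR d)
  have hcommP : ∀ u ∈ I, ∀ s ∈ I, Commute (matR d (A u)) (P s) := by
    intro u hu s hs
    exact integral_commute_aux (hAhint s hs) _
      fun τ hτ => hAhcomm τ (hsub s hs hτ) u hu
  have hcommPP : ∀ u ∈ I, ∀ s ∈ I, Commute (P u) (P s) := by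
    intro u hu s hs
    exact (integral_commute_aux (hAhint u hu) _
      fun τ hτ => (hcommP τ (hsub u hu hτ) s hs)).symm
  have hPd : ∀ u ∈ I, HasDerivWithinAt P (matR d (A u)) I u := fun u hu =>
    ftc_within_aux hI hAhc ht₀ hu
  have hPc : ContinuousOn P I := fun u hu => (hPd u hu).continuousWithinAt
  set g : ℝ → Fin d → ℝ := fun τ => NormedSpace.exp (-∫ σ in t₀..τ, A σ) *ᵥ b τ with hgdef
  have hgr : ∀ τ ∈ I, g τ = (NormedSpace.exp (-P τ)) (b τ) := by
    intro τ hτ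
    rw [hgdef]
    simp only [← matR_apply, matR_exp, map_neg, hφB τ hτ]
  have hgc : ContinuousOn g I := by
    have : ContinuousOn (fun τ => (NormedSpace.exp (-P τ)) (b τ)) I :=
      ContinuousOn.clm_apply (exp_continuous.comp_continuousOn hPc.neg) hb
    exact this.congr hgr
  set w : ℝ → Fin d → ℝ := fun s => ∫ τ in t₀..s, g τ with hwdef
  have hwd : HasDerivWithinAt w (g t) I t := ftc_within_aux hI hgc ht₀ ht
  set X : ℝ → Fin d → ℝ := fun s => (NormedSpace.exp (P s)) (x₀ + w s) with hXdef
  have hxX : ∀ s ∈ I, x s = X s := by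
    intro s hs
    rw [hx s, hXdef]
    simp only [← matR_apply, matR_exp, hφB s hs]
    rfl
  have hDd : HasDerivWithinAt (fun s => P s - P t) (matR d (A t)) I t := (hPd t ht).sub_const _
  have h0 : HasFDerivAt (NormedSpace.exp : _ → (Fin d → ℝ) →L[ℝ] (Fin d → ℝ))
      (1 : _ →L[ℝ] _) (P t - P t) := by
    rw [sub_self]; exact hasFDerivAt_exp_zero
  have h1 : HasDerivWithinAt (fun s => NormedSpace.exp (P s - P t)) (matR d (A t)) I t := by
    have := h0.comp_hasDerivWithinAt t hDd
    exact this
  have h2 : HasDerivWithinAt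
      (fun s => NormedSpace.exp (P t) * NormedSpace.exp (P s - P t))
      (NormedSpace.exp (P t) * matR d (A t)) I t := h1.const_mul _
  have h3 : HasDerivWithinAt (fun s => NormedSpace.exp (P s))
      (NormedSpace.exp (P t) * matR d (A t)) I t := by
    refine h2.congr (fun s hs => ?_) ?_
    · have hc : Commute (P t) (P s - P t) :=
        (hcommPP t ht s hs).sub_right (Commute.refl (P t))
      rw [← exp_add_of_commute hc, add_sub_cancel]
    · have hc : Commute (P t) (P t - P t) :=
        (hcommPP t ht t ht).sub_right (Commute.refl (P t))
      rw [← exp_add_of_commute hc, add_sub_cancel]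
  have hce : Commute (matR d (A t)) (NormedSpace.exp (P t)) :=
    (hcommP t ht t ht).exp_right
  rw [← hce.eq] at h3
  have hX : HasDerivWithinAt X
      ((matR d (A t) * NormedSpace.exp (P t)) (x₀ + w t)
        + (NormedSpace.exp (P t)) (g t)) I t :=
    h3.clm_apply (hwd.const_add x₀)
  have hval : (matR d (A t) * NormedSpace.exp (P t)) (x₀ + w t)
      + (NormedSpace.exp (P t)) (g t) = A t *ᵥ x t + b t := by
    congr 1
    · rw [ContinuousLinearMap.mul_apply, hxX t ht, hXdef]
      simp only [matR_apply]
    · rw [hgr t ht, ← ContinuousLinearMap.mul_apply,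
        ← exp_add_of_commute (Commute.refl (P t)).neg_right, add_neg_cancel, exp_zero,
        ContinuousLinearMap.one_apply]
  rw [hval] at hX
  exact hX.congr hxX (hxX t ht)
end
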